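/- arXiv:0711.1384 — 4 statements merged into one kernel-verified Lean document; each statement's English description precedes it below -/
import Mathlib

section
/- If q is a positive function on (0,1], nondecreasing near zero, and the integral I(q,c) = ∫₀¹ t⁻¹ exp(−c q²(t)/t) dt is finite for some c > 0, then lim_{t↓0} t^{1/2}/q(t) = 0. -/
open MeasureTheory Filter Set

/-- `q` belongs to the class `Q`: positive on `(0,1]` with
`inf_{δ ≤ t ≤ 1} q(t) > 0` for every `0 < δ < 1`, and nondecreasing near zero. -/
def MemQ (q : ℝ → ℝ) : Prop :=
  (∀ t ∈ Set.Ioc (0:ℝ) 1, 0 < q t) ∧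
  (∀ δ ∈ Set.Ioo (0:ℝ) 1, 0 < sInf (q '' Set.Icc δ 1)) ∧
  ∃ δ > (0:ℝ), MonotoneOn q (Set.Ioc 0 δ)

/-- `I(q,c) = ∫₀¹ t⁻¹ exp(−c q²(t)/t) dt` is finite. -/
def IFin (q : ℝ → ℝ) (c : ℝ) : Prop :=
  MeasureTheory.IntegrableOn (fun t => t⁻¹ * Real.exp (-c * (q t)^2 / t)) (Set.Ioc (0:ℝ) 1)

theorem stmt0 (q : ℝ → ℝ) (hq : MemQ q) (h : ∃ c > (0:ℝ), IFin q c) :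
    Tendsto (fun t => Real.sqrt t / q t) (nhdsWithin 0 (Set.Ioi 0)) (nhds 0) := by
  obtain ⟨c, hc, hI⟩ := h
  obtain ⟨hpos, -, δ, hδ, hmono⟩ := hq
  set f : ℝ → ℝ := fun t => t⁻¹ * Real.exp (-c * (q t)^2 / t) with hf
  have hInt : IntegrableOn f (Set.Ioc (0:ℝ) 1) := hI
  -- f is nonnegative on (0, 1]
  have hfnn : ∀ x ∈ Set.Ioc (0:ℝ) 1, 0 ≤ f x := fun x hx =>
    mul_nonneg (inv_nonneg.2 hx.1.le) (Real.exp_pos _).le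
  -- Key step: q(t)^2/t → ∞
  have key : ∀ M : ℝ, 0 < M → ∀ᶠ t in nhdsWithin 0 (Set.Ioi 0), M * t < q t ^ 2 := by
    intro M hM
    by_contra hcon
    rw [Filter.not_eventually] at hcon
    set u : ℕ → ℝ := fun n => 1 / (n + 1) with hu
    have hu0 : Tendsto u atTop (nhds 0) := tendsto_one_div_add_atTop_nhds_zero_nat
    have hupos : ∀ n, 0 < u n := fun n => by positivity
    have hule : ∀ n, u n ≤ 1 := fun n => by
      rw [hu]; rw [div_le_one (by positivity)]; push_cast; linarith
    -- union of Ioc (u n) 1 is Ioc 0 1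
    have hUnion : (⋃ n, Set.Ioc (u n) 1) = Set.Ioc (0:ℝ) 1 := by
      ext x
      simp only [Set.mem_iUnion, Set.mem_Ioc]
      constructor
      · rintro ⟨n, hn1, hn2⟩; exact ⟨(hupos n).trans hn1, hn2⟩
      · rintro ⟨hx0, hx1⟩
        obtain ⟨n, hn⟩ := exists_nat_one_div_lt hx0
        refine ⟨n, ?_, hx1⟩
        show 1 / ((n:ℝ) + 1) < x
        push_cast at hn ⊢
        exact hn
    have hmonoU : Monotone fun n => Set.Ioc (u n) 1 := by
      intro m n hmn
      apply Set.Ioc_subset_Ioc_left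
      rw [hu]
      apply one_div_le_one_div_of_le (by positivity)
      push_cast; linarith [(Nat.cast_le (α := ℝ)).2 hmn]
    have htendA : Tendsto (fun n => ∫ x in Set.Ioc (u n) 1, f x) atTop
        (nhds (∫ x in Set.Ioc (0:ℝ) 1, f x)) := by
      have := tendsto_setIntegral_of_monotone (fun n => measurableSet_Ioc) hmonoU
        (by rwa [hUnion])
      rwa [hUnion] at this
    -- split: ∫_{(0,u n]} f = total − ∫_{(u n, 1]} f
    have hsplit : ∀ n, ∫ x in Set.Ioc (0:ℝ) (u n), f x =
        (∫ x in Set.Ioc (0:ℝ) 1, f x) - ∫ x in Set.Ioc (u n) 1, f x := by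
      intro n
      have hun : Set.Ioc (0:ℝ) (u n) ∪ Set.Ioc (u n) 1 = Set.Ioc (0:ℝ) 1 :=
        Set.Ioc_union_Ioc_eq_Ioc (hupos n).le (hule n)
      have hdisj : Disjoint (Set.Ioc (0:ℝ) (u n)) (Set.Ioc (u n) 1) :=
        Set.Ioc_disjoint_Ioc_of_le le_rfl
      have := setIntegral_union hdisj measurableSet_Ioc
        (hInt.mono_set (by rw [← hun]; exact Set.subset_union_left))
        (hInt.mono_set (by rw [← hun]; exact Set.subset_union_right)) (f := f) (μ := volume)
      rw [hun] at this
      linarith [this]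
    have htendTail : Tendsto (fun n => ∫ x in Set.Ioc (0:ℝ) (u n), f x) atTop (nhds 0) := by
      simp only [hsplit]
      have := (tendsto_const_nhds (x := ∫ x in Set.Ioc (0:ℝ) 1, f x)
        (f := atTop (α := ℕ))).sub htendA
      simpa using this
    set B : ℝ := Real.exp (-(2 * c * M)) / 2 with hB
    have hBpos : 0 < B := by positivity
    have hevsmall : ∀ᶠ n in atTop, (∫ x in Set.Ioc (0:ℝ) (u n), f x) < B :=
      htendTail.eventually_lt_const hBpos
    have hevδ : ∀ᶠ n in atTop, u n < min δ 1 :=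
      hu0.eventually_lt_const (lt_min hδ one_pos)
    obtain ⟨n, hn1, hn2⟩ := (hevsmall.and hevδ).exists
    set ε := u n with hε
    have hε0 : 0 < ε := hupos n
    have hεδ : ε < δ := lt_of_lt_of_le hn2 (min_le_left _ _)
    have hε1 : ε < 1 := lt_of_lt_of_le hn2 (min_le_right _ _)
    -- frequently: pick t ∈ (0, ε) with q t ^ 2 ≤ M t
    obtain ⟨t, htmem, hqt⟩ := ((nhdsGT_basis (0:ℝ)).frequently_iff.1 hcon) ε hε0
    push_neg at hqt
    obtain ⟨ht0, htε⟩ := htmem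
    have htδ : t < δ := htε.trans hεδ
    have ht1 : t ≤ 1 := (htε.trans hε1).le
    -- lower bound for f on (t/2, t]
    have hlow : ∀ s ∈ Set.Ioc (t/2) t, t⁻¹ * Real.exp (-(2 * c * M)) ≤ f s := by
      intro s hs
      have hs0 : 0 < s := lt_trans (half_pos ht0) hs.1
      have hqs : q s ≤ q t := hmono ⟨hs0, hs.2.trans htδ.le⟩ ⟨ht0, htδ.le⟩ hs.2
      have hqs0 : 0 < q s := hpos s ⟨hs0, hs.2.trans ht1⟩
      have h1 : q s ^ 2 ≤ M * t := le_trans (by nlinarith) hqt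
      have h2 : c * q s ^ 2 / s ≤ 2 * c * M := by
        rw [div_le_iff₀ hs0]
        nlinarith [hs.1, mul_le_mul_of_nonneg_left h1 hc.le, mul_pos hc hM,
          mul_nonneg (mul_pos hc hM).le (show (0:ℝ) ≤ 2 * s - t by linarith [hs.1])]
      have hexp : Real.exp (-(2 * c * M)) ≤ Real.exp (-c * q s ^ 2 / s) := by
        apply Real.exp_le_exp.2
        have : -c * q s ^ 2 / s = -(c * q s ^ 2 / s) := by ring
        rw [this]
        linarith
      have hinv : t⁻¹ ≤ s⁻¹ := by
        apply inv_anti₀ hs0 hs.2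
      calc t⁻¹ * Real.exp (-(2 * c * M)) ≤ s⁻¹ * Real.exp (-c * q s ^ 2 / s) :=
            mul_le_mul hinv hexp (Real.exp_pos _).le (inv_nonneg.2 hs0.le)
        _ = f s := rfl
    have hsub1 : Set.Ioc (t/2) t ⊆ Set.Ioc (0:ℝ) 1 := fun x hx =>
      ⟨lt_trans (half_pos ht0) hx.1, hx.2.trans ht1⟩
    have hIt : IntegrableOn f (Set.Ioc (t/2) t) := hInt.mono_set hsub1
    have hBle : B ≤ ∫ s in Set.Ioc (t/2) t, f s := by
      have hvol : volume (Set.Ioc (t/2) t) = ENNReal.ofReal (t/2) := by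
        rw [Real.volume_Ioc]; congr 1; ring
      have := setIntegral_ge_of_const_le measurableSet_Ioc
        (by rw [hvol]; exact ENNReal.ofReal_ne_top) hlow hIt
      rw [measureReal_def, hvol, ENNReal.toReal_ofReal (by linarith), smul_eq_mul, mul_comm] at this
      have heq : t⁻¹ * Real.exp (-(2 * c * M)) * (t / 2) = B := by
        rw [hB]; field_simp
      linarith [heq ▸ this]
    have hsub2 : Set.Ioc (t/2) t ⊆ Set.Ioc (0:ℝ) ε := fun x hx =>
      ⟨lt_trans (half_pos ht0) hx.1, hx.2.trans htε.le⟩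
    have hIε : IntegrableOn f (Set.Ioc (0:ℝ) ε) :=
      hInt.mono_set (Set.Ioc_subset_Ioc_right hε1.le)
    have hle2 : (∫ s in Set.Ioc (t/2) t, f s) ≤ ∫ s in Set.Ioc (0:ℝ) ε, f s := by
      apply setIntegral_mono_set hIε
      · filter_upwards [ae_restrict_mem measurableSet_Ioc] with x hx
        exact hfnn x ⟨hx.1, hx.2.trans hε1.le⟩
      · exact Filter.Eventually.of_forall hsub2
    linarith
  -- conclude the tendsto statement
  rw [Metric.tendsto_nhds]
  intro η hη
  have hM : (0:ℝ) < η⁻¹ ^ 2 := by positivity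
  have h1 : ∀ᶠ t in nhdsWithin (0:ℝ) (Set.Ioi 0), t ∈ Set.Ioi (0:ℝ) :=
    eventually_mem_nhdsWithin
  have h2 : ∀ᶠ t in nhdsWithin (0:ℝ) (Set.Ioi 0), t < 1 :=
    eventually_nhdsWithin_of_eventually_nhds (tendsto_id.eventually_lt_const one_pos)
  filter_upwards [key _ hM, h1, h2] with t hkey ht0 ht1
  have ht0' : 0 < t := ht0
  have hqt0 : 0 < q t := hpos t ⟨ht0', ht1.le⟩
  have hsq : Real.sqrt t < η * q t := by
    rw [Real.sqrt_lt' (by positivity)]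
    have hη2 : 0 < η ^ 2 := by positivity
    rw [mul_pow]
    calc t = η ^ 2 * (η⁻¹ ^ 2 * t) := by field_simp
      _ < η ^ 2 * q t ^ 2 := mul_lt_mul_of_pos_left hkey hη2
  have : Real.sqrt t / q t < η := (div_lt_iff₀ hqt0).2 (by linarith)
  rw [Real.dist_eq, sub_zero, abs_of_nonneg (div_nonneg (Real.sqrt_nonneg _) hqt0.le)]
  exact this
end

section
/- Let W be a standard Wiener process and q a positive measurable function on (0,1], and 0 < p < ∞. Then ∫_{0+}^1 t^{p/2}/q(t) dt < ∞ if and only if ∫_{0+}^1 |W(t)|^p/q(t) dt < ∞ almost surely. -/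
open MeasureTheory Filter Set ProbabilityTheory

/-- `W` is a standard Wiener process (Brownian motion) on `[0,∞)` over `(Ω, μ)`:
starts at 0, has independent Gaussian increments with the right variance,
and has a.s. continuous paths. -/
structure IsStandardBM {Ω : Type*} [MeasurableSpace Ω] (μ : Measure Ω)
    (W : ℝ → Ω → ℝ) : Prop where
  meas : ∀ t, Measurable (W t)
  start : ∀ᵐ ω ∂μ, W 0 ω = 0
  gauss : ∀ s t : ℝ, 0 ≤ s → s ≤ t →
    μ.map (fun ω => W t ω - W s ω) = gaussianReal 0 (Real.toNNReal (t - s))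
  indep : ∀ (n : ℕ) (ts : Fin (n+1) → ℝ), Monotone ts → (∀ i, 0 ≤ ts i) →
    iIndepFun
      (fun i : Fin n => fun ω => W (ts i.succ) ω - W (ts i.castSucc) ω) μ
  cont : ∀ᵐ ω ∂μ, Continuous fun t => W t ω

section Aux

open Real
open scoped ENNReal NNReal Topology


lemma integ_abs_rpow {b : ℝ} (hb : 0 < b) {s : ℝ} (hs : 0 ≤ s) :
    Integrable fun x : ℝ => |x| ^ s * Real.exp (-b * x ^ 2) := by
  rw [← integrableOn_univ, ← @Iio_union_Ici _ _ (0 : ℝ), integrableOn_union,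
    integrableOn_Ici_iff_integrableOn_Ioi]
  constructor
  · rw [← (Measure.measurePreserving_neg (volume : Measure ℝ)).integrableOn_comp_preimage
        (Homeomorph.neg ℝ).measurableEmbedding]
    simp only [Function.comp_def, neg_sq, neg_preimage, neg_Iio, neg_neg, neg_zero, abs_neg]
    exact (integrableOn_rpow_mul_exp_neg_mul_sq hb (by linarith)).congr_fun
      (fun x hx => by rw [abs_of_pos hx]) measurableSet_Ioi
  · exact (integrableOn_rpow_mul_exp_neg_mul_sq hb (by linarith)).congr_fun
      (fun x hx => by rw [abs_of_pos hx]) measurableSet_Ioi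

lemma Cp_lt_top {s : ℝ} (hs : 0 ≤ s) :
    ∫⁻ x, ENNReal.ofReal (|x| ^ s) ∂(gaussianReal 0 1) < ⊤ := by
  rw [gaussianReal_of_var_ne_zero 0 one_ne_zero,
    lintegral_withDensity_eq_lintegral_mul _ (measurable_gaussianPDF 0 1)
      (by fun_prop)]
  have h : ∀ x : ℝ, gaussianPDF 0 1 x * ENNReal.ofReal (|x| ^ s)
      = ENNReal.ofReal (|x| ^ s * gaussianPDFReal 0 1 x) := by
    intro x
    rw [gaussianPDF, ← ENNReal.ofReal_mul (gaussianPDFReal_nonneg 0 1 x), mul_comm]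
  simp only [Pi.mul_apply, h]
  have hint : Integrable fun x : ℝ => |x| ^ s * gaussianPDFReal 0 1 x := by
    have : (fun x : ℝ => |x| ^ s * gaussianPDFReal 0 1 x)
        = fun x : ℝ => (Real.sqrt (2 * Real.pi * 1))⁻¹ * (|x| ^ s * Real.exp (-(2⁻¹) * x ^ 2)) := by
      funext x
      rw [gaussianPDFReal]
      push_cast
      ring_nf
    rw [this]
    exact ((integ_abs_rpow (by norm_num) hs)).const_mul _
  exact hint.lintegral_lt_top

lemma gauss_scale {t : ℝ} (ht : 0 < t) :
    gaussianReal 0 (Real.toNNReal t) = (gaussianReal 0 1).map (fun x => Real.sqrt t * x) := by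
  have := gaussianReal_map_const_mul (μ := 0) (v := 1) (Real.sqrt t)
  rw [this, mul_zero]
  congr 1
  ext
  simp [Real.sq_sqrt ht.le, Real.coe_toNNReal _ ht.le]

lemma gauss_moment {t : ℝ} (ht : 0 < t) {s : ℝ} (hs : 0 ≤ s) :
    ∫⁻ x, ENNReal.ofReal (|x| ^ s) ∂(gaussianReal 0 (Real.toNNReal t))
      = ENNReal.ofReal (t ^ (s / 2)) * ∫⁻ x, ENNReal.ofReal (|x| ^ s) ∂(gaussianReal 0 1) := by
  rw [gauss_scale ht, lintegral_map (by fun_prop) (by fun_prop)]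
  rw [← lintegral_const_mul _ (by fun_prop)]
  congr 1
  funext x
  rw [abs_mul, abs_of_nonneg (Real.sqrt_nonneg t),
    Real.mul_rpow (Real.sqrt_nonneg t) (abs_nonneg x),
    ← ENNReal.ofReal_mul (by positivity)]
  congr 2
  rw [Real.sqrt_eq_rpow, ← Real.rpow_mul ht.le, one_div, inv_mul_eq_div]

lemma gauss_tail {t : ℝ} (ht : 0 < t) :
    (gaussianReal 0 (Real.toNNReal t)) {x | Real.sqrt t ≤ |x|}
      = (gaussianReal 0 1) {x | 1 ≤ |x|} := by
  rw [gauss_scale ht, Measure.map_apply (by fun_prop) (measurableSet_le measurable_const measurable_abs)]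
  congr 1
  ext x
  have hst : 0 < Real.sqrt t := Real.sqrt_pos.mpr ht
  simp only [mem_preimage, mem_setOf_eq, abs_mul, abs_of_nonneg (Real.sqrt_nonneg t)]
  constructor
  · intro h; nlinarith [abs_nonneg x]
  · intro h; nlinarith

lemma gauss_tail_pos : 0 < (gaussianReal 0 1) {x | 1 ≤ |x|} := by
  have h1 : (gaussianReal 0 1) (Ici (1:ℝ)) ≤ (gaussianReal 0 1) {x | 1 ≤ |x|} := by
    apply measure_mono
    intro x hx
    simp only [mem_Ici] at hx
    simp only [mem_setOf_eq]
    exact le_trans hx (le_abs_self x)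
  refine lt_of_lt_of_le ?_ h1
  rw [gaussianReal_of_var_ne_zero 0 one_ne_zero, withDensity_apply _ measurableSet_Ici]
  rw [pos_iff_ne_zero]
  intro h0
  rw [lintegral_eq_zero_iff (measurable_gaussianPDF 0 1)] at h0
  rw [Filter.EventuallyEq, ae_restrict_iff' measurableSet_Ici] at h0
  have h0' : ∀ᵐ x : ℝ, x ∉ Ici (1:ℝ) := h0.mono (fun x hx hmem =>
    absurd (hx hmem) (gaussianPDF_pos 0 one_ne_zero x).ne')
  have hv := ae_iff.mp h0'
  simp only [not_not] at hv
  rw [show {x : ℝ | x ∈ Ici (1:ℝ)} = Ici 1 from rfl, Real.volume_Ici] at hv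
  exact ENNReal.top_ne_zero hv

lemma exists_modification {Ω : Type*} [MeasurableSpace Ω] {μ : Measure Ω}
    {W : ℝ → Ω → ℝ} (hW : IsStandardBM μ W) :
    ∃ W' : ℝ → Ω → ℝ, Measurable (Function.uncurry W') ∧ (∀ t, Measurable (W' t)) ∧
      (∀ᵐ ω ∂μ, ∀ t, W' t ω = W t ω) ∧
      (∀ t : ℝ, 0 ≤ t → μ.map (W' t) = gaussianReal 0 (Real.toNNReal t)) := by
  classical
  set N : Set Ω := {ω | ¬ Continuous fun t => W t ω} with hN
  have hNnull : μ (toMeasurable μ N) = 0 := by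
    rw [measure_toMeasurable]
    exact hW.cont
  set M := toMeasurable μ N with hM
  refine ⟨fun t ω => if ω ∈ M then 0 else W t ω, ?_, ?_, ?_, ?_⟩
  · apply measurable_uncurry_of_continuous_of_measurable
    · intro ω
      by_cases h : ω ∈ M
      · simp only [h, if_true]; exact continuous_const
      · simp only [h, if_false]
        have : ω ∉ N := fun hn => h (subset_toMeasurable μ N hn)
        simpa [hN] using not_not.mp (by simpa [hN] using this)
    · intro t
      exact Measurable.ite (measurableSet_toMeasurable μ N) measurable_const (hW.meas t)
  · intro t
    exact Measurable.ite (measurableSet_toMeasurable μ N) measurable_const (hW.meas t)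
  · have : ∀ᵐ ω ∂μ, ω ∉ M := by
      rw [ae_iff]; simpa using hNnull
    exact this.mono fun ω hω t => by simp [hω]
  · intro t ht
    have hae : ∀ᵐ ω ∂μ, (fun ω => if ω ∈ M then 0 else W t ω) ω = (fun ω => W t ω - W 0 ω) ω := by
      have h1 : ∀ᵐ ω ∂μ, ω ∉ M := by rw [ae_iff]; simpa using hNnull
      filter_upwards [h1, hW.start] with ω hω h0
      simp [hω, h0]
    rw [Measure.map_congr hae, hW.gauss 0 t le_rfl ht, sub_zero]

noncomputable def etaM (F : ℝ → ℝ) : Measure ℝ :=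
  (volume.restrict (Ioc (0:ℝ) 1)).withDensity (fun t => ENNReal.ofReal (F t))

def Cset (F : ℝ → ℝ) (k : ℕ) : Set ℝ := Ioc 0 (1/((k:ℝ)+1)) ∪ {t | (k:ℝ)+1 < F t}

lemma Cset_meas {F : ℝ → ℝ} (hFm : Measurable F) (k : ℕ) : MeasurableSet (Cset F k) :=
  measurableSet_Ioc.union (measurableSet_lt measurable_const hFm)

lemma Cset_anti {F : ℝ → ℝ} : Antitone (Cset F) := by
  apply antitone_nat_of_succ_le
  intro k
  apply Set.union_subset_union
  · apply Ioc_subset_Ioc le_rfl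
    apply one_div_le_one_div_of_le (by positivity)
    push_cast; linarith
  · intro t ht
    simp only [mem_setOf_eq] at ht ⊢
    push_cast at ht ⊢; linarith

lemma Cset_escape {F : ℝ → ℝ} {t : ℝ} (ht : t ∈ Ioc (0:ℝ) 1) : ∃ k, t ∉ Cset F k := by
  obtain ⟨k, hk⟩ := exists_nat_gt (max (1/t) (F t))
  refine ⟨k, ?_⟩
  have h1 : 1/t < (k:ℝ) + 1 := lt_of_le_of_lt (le_max_left _ _) (by linarith)
  have h2 : F t < (k:ℝ) + 1 := lt_of_le_of_lt (le_max_right _ _) (by linarith)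
  intro hmem
  rcases hmem with h | h
  · have ht0 := ht.1
    rw [div_lt_iff₀ ht0] at h1
    have h3 : t ≤ 1/((k:ℝ)+1) := h.2
    rw [le_div_iff₀ (by positivity)] at h3
    rw [mul_comm] at h3
    exact absurd h3 (not_le.mpr h1)
  · exact absurd h (not_lt.mpr h2.le)

lemma etaM_apply {F : ℝ → ℝ} (hFm : Measurable F) {S : Set ℝ} (hS : MeasurableSet S) :
    etaM F S = ∫⁻ t in S ∩ Ioc (0:ℝ) 1, ENNReal.ofReal (F t) := by
  rw [etaM, withDensity_apply _ hS, Measure.restrict_restrict hS]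

lemma etaM_le {F : ℝ → ℝ} (hFm : Measurable F) {S : Set ℝ} (hS : MeasurableSet S) {c : ℝ}
    (hc : ∀ t ∈ S, F t ≤ c) :
    etaM F S ≤ ENNReal.ofReal c * volume (S ∩ Ioc (0:ℝ) 1) := by
  rw [etaM_apply hFm hS, ← setLIntegral_const]
  refine setLIntegral_mono' (hS.inter measurableSet_Ioc) fun t ht => ?_
  exact ENNReal.ofReal_le_ofReal (hc t ht.1)

lemma etaM_univ {F : ℝ → ℝ} (hFm : Measurable F) :
    etaM F univ = ∫⁻ t in Ioc (0:ℝ) 1, ENNReal.ofReal (F t) := by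
  rw [etaM_apply hFm MeasurableSet.univ, univ_inter]

lemma exists_pieces {F : ℝ → ℝ} (hFm : Measurable F)
    (hη : etaM F univ = ⊤) (k : ℕ) :
    ∃ B : Set ℝ, MeasurableSet B ∧ B ⊆ Cset F k ∧ B ⊆ Ioc (0:ℝ) 1 ∧
      1 ≤ etaM F B ∧ etaM F B ≤ 2 := by
  classical
  set η := etaM F with hηdef
  -- η (C k) = ⊤
  have hcompl : η (Cset F k)ᶜ ≤ ENNReal.ofReal ((k:ℝ)+1) := by
    calc η (Cset F k)ᶜ ≤ ENNReal.ofReal ((k:ℝ)+1) * volume ((Cset F k)ᶜ ∩ Ioc (0:ℝ) 1) := by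
          apply etaM_le hFm (Cset_meas hFm k).compl
          intro t ht
          simp only [Cset, compl_union, mem_inter_iff, mem_compl_iff, mem_setOf_eq] at ht
          exact not_lt.mp ht.2
      _ ≤ ENNReal.ofReal ((k:ℝ)+1) * volume (Ioc (0:ℝ) 1) := by
          gcongr; exact inter_subset_right
      _ ≤ ENNReal.ofReal ((k:ℝ)+1) * 1 := by
          rw [Real.volume_Ioc]; gcongr; simp
      _ = ENNReal.ofReal ((k:ℝ)+1) := mul_one _
  have hCk : η (Cset F k) = ⊤ := by
    by_contra hne
    have hle : (⊤:ℝ≥0∞) ≤ η (Cset F k) + η (Cset F k)ᶜ := by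
      rw [← hη, ← union_compl_self (Cset F k)]
      exact measure_union_le _ _
    have hlt : η (Cset F k) + η (Cset F k)ᶜ < ⊤ :=
      ENNReal.add_lt_top.mpr ⟨lt_top_iff_ne_top.mpr hne, lt_of_le_of_lt hcompl ENNReal.ofReal_lt_top⟩
    exact lt_irrefl ⊤ (lt_of_le_of_lt hle hlt)
  -- the union of D j exhausts C k ∩ Ioc 0 1
  set D : ℕ → Set ℝ := fun j => (Cset F k ∩ Ioc (0:ℝ) 1) \ Cset F j with hDdef
  have hDmeas : ∀ j, MeasurableSet (D j) :=
    fun j => ((Cset_meas hFm k).inter measurableSet_Ioc).diff (Cset_meas hFm j)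
  have hDmono : Monotone D := by
    intro a b hab
    exact diff_subset_diff_right (Cset_anti hab)
  have hDunion : ⋃ j, D j = Cset F k ∩ Ioc (0:ℝ) 1 := by
    apply subset_antisymm
    · exact iUnion_subset fun j => diff_subset
    · intro t ht
      obtain ⟨j, hj⟩ := Cset_escape (F := F) ht.2
      exact mem_iUnion.mpr ⟨j, ht, hj⟩
  have hηCkIoc : η (Cset F k ∩ Ioc (0:ℝ) 1) = ⊤ := by
    rw [hηdef, etaM_apply hFm ((Cset_meas hFm k).inter measurableSet_Ioc),
      inter_assoc, inter_self]
    rw [hηdef, etaM_apply hFm (Cset_meas hFm k)] at hCk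
    exact hCk
  have hsup : (⨆ j, η (D j)) = ⊤ := by
    rw [← hDmono.directed_le.measure_iUnion, hDunion, hηCkIoc]
  obtain ⟨j, hj⟩ : ∃ j : ℕ, (2:ℝ≥0∞) < η (D j) := by
    apply lt_iSup_iff.mp
    rw [hsup]
    exact lt_top_iff_ne_top.mpr (by simp)
  set S := D j with hSdef
  have hSmeas : MeasurableSet S := hDmeas j
  have hSIoc : S ⊆ Ioc (0:ℝ) 1 := fun t ht => ht.1.2
  have hSCk : S ⊆ Cset F k := fun t ht => ht.1.1
  have hSF : ∀ t ∈ S, F t ≤ (j:ℝ)+1 := by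
    intro t ht
    have := ht.2
    simp only [Cset, mem_union, not_or, mem_setOf_eq] at this
    exact not_lt.mp this.2
  set ε : ℝ := 1/((j:ℝ)+1) with hεdef
  have hεpos : 0 < ε := by positivity
  set h : ℕ → ℝ≥0∞ := fun i => η (S ∩ Ioi (1 - i * ε)) with hhdef
  have hh0 : h 0 = 0 := by
    have : S ∩ Ioi (1 - (0:ℕ) * ε) = ∅ := by
      apply eq_empty_of_forall_notMem
      intro t ⟨htS, hti⟩
      simp only [Nat.cast_zero, zero_mul, sub_zero, mem_Ioi] at hti
      exact absurd (hSIoc htS).2 (not_le.mpr hti)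
    rw [hhdef]; simp only [this, measure_empty]
  have hstep : ∀ i : ℕ, h (i+1) ≤ h i + 1 := by
    intro i
    have hsub : S ∩ Ioi (1 - (i+1 : ℕ) * ε) ⊆
        (S ∩ Ioi (1 - i * ε)) ∪ (S ∩ Ioc (1 - ((i:ℝ)+1) * ε) (1 - i * ε)) := by
      intro t ⟨htS, hti⟩
      simp only [mem_Ioi, Nat.cast_add, Nat.cast_one] at hti
      by_cases hcase : 1 - (i:ℝ) * ε < t
      · exact Or.inl ⟨htS, hcase⟩
      · exact Or.inr ⟨htS, hti, not_lt.mp hcase⟩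
    have hslab : η (S ∩ Ioc (1 - ((i:ℝ)+1) * ε) (1 - i * ε)) ≤ 1 := by
      calc η (S ∩ Ioc (1 - ((i:ℝ)+1) * ε) (1 - i * ε))
          ≤ ENNReal.ofReal ((j:ℝ)+1) * volume ((S ∩ Ioc (1 - ((i:ℝ)+1) * ε) (1 - i * ε)) ∩ Ioc (0:ℝ) 1) := by
            apply etaM_le hFm (hSmeas.inter measurableSet_Ioc)
            exact fun t ht => hSF t ht.1
        _ ≤ ENNReal.ofReal ((j:ℝ)+1) * volume (Ioc (1 - ((i:ℝ)+1) * ε) (1 - i * ε)) := by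
            gcongr
            exact fun t ht => ht.1.2
        _ = ENNReal.ofReal ((j:ℝ)+1) * ENNReal.ofReal ε := by
            rw [Real.volume_Ioc]
            congr 1
            ring_nf
        _ = 1 := by
            rw [← ENNReal.ofReal_mul (by positivity), hεdef, mul_one_div,
              div_self (by positivity), ENNReal.ofReal_one]
    calc h (i+1) ≤ η ((S ∩ Ioi (1 - i * ε)) ∪ (S ∩ Ioc (1 - ((i:ℝ)+1) * ε) (1 - i * ε))) :=
          measure_mono hsub
      _ ≤ h i + 1 := le_trans (measure_union_le _ _) (by gcongr)
  have hbig : 2 < h (j+1) := by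
    have : S ∩ Ioi (1 - ((j:ℕ)+1 : ℕ) * ε) = S := by
      apply inter_eq_self_of_subset_left
      intro t ht
      have h1 : ((j:ℕ)+1 : ℕ) * ε = 1 := by
        push_cast [hεdef]
        rw [mul_one_div, div_self (by positivity)]
      rw [mem_Ioi, h1, sub_self]
      exact (hSIoc ht).1
    rw [hhdef]
    simp only [this]
    exact hj
  -- least i with 1 ≤ h i
  have hex : ∃ i, 1 ≤ h i := ⟨j+1, le_trans (by norm_num) hbig.le⟩
  set i0 := Nat.find hex with hi0
  have hi0le : 1 ≤ h i0 := Nat.find_spec hex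
  have hi0ne : i0 ≠ 0 := by
    intro h0
    rw [h0, hh0] at hi0le
    simp at hi0le
  obtain ⟨i1, hi1⟩ : ∃ i1, i0 = i1 + 1 := ⟨i0 - 1, (Nat.succ_pred_eq_of_pos (Nat.pos_of_ne_zero hi0ne)).symm⟩
  have hprev : h i1 < 1 := by
    rcases lt_or_ge (h i1) 1 with hlt | hge
    · exact hlt
    · have hcon : i0 ≤ i1 := by rw [hi0]; exact Nat.find_le hge
      omega
  have hub : h i0 ≤ 2 := by
    rw [hi1]
    calc h (i1 + 1) ≤ h i1 + 1 := hstep i1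
      _ ≤ 1 + 1 := add_le_add_left hprev.le 1
      _ = 2 := one_add_one_eq_two
  exact ⟨S ∩ Ioi (1 - i0 * ε), hSmeas.inter measurableSet_Ioi,
    fun t ht => hSCk ht.1, fun t ht => hSIoc ht.1, hi0le, hub⟩


end Aux

open scoped ENNReal NNReal Topology in
/-- `∫₀¹ t^{p/2}/q(t) dt < ∞` iff `∫₀¹ |W(t)|^p/q(t) dt < ∞` almost surely. -/
theorem stmt5 {Ω : Type*} [MeasurableSpace Ω] (μ : Measure Ω) [IsProbabilityMeasure μ]
    (W : ℝ → Ω → ℝ) (hW : IsStandardBM μ W) (q : ℝ → ℝ) (hqm : Measurable q)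
    (hq : ∀ t ∈ Set.Ioc (0:ℝ) 1, 0 < q t) (p : ℝ) (hp : 0 < p) :
    (∫⁻ t in Set.Ioc (0:ℝ) 1, ENNReal.ofReal (t ^ (p/2) / q t) < ⊤) ↔
      (∀ᵐ ω ∂μ, ∫⁻ t in Set.Ioc (0:ℝ) 1, ENNReal.ofReal (|W t ω| ^ p / q t) < ⊤) := by
  classical
  obtain ⟨W', hW'prod, hW'meas, hW'ae, hW'map⟩ := exists_modification hW
  set F : ℝ → ℝ := fun t => t ^ (p/2) / q t with hFdef
  have hFm : Measurable F := Measurable.div (by fun_prop) hqm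
  have habs_p : Measurable fun x : ℝ => |x| ^ p := by fun_prop
  have hmx : Measurable fun x : ℝ => ENNReal.ofReal (|x| ^ p) := by fun_prop
  set Cp : ℝ≥0∞ := ∫⁻ x, ENNReal.ofReal (|x| ^ p) ∂(gaussianReal 0 1) with hCpdef
  have hCptop : Cp < ⊤ := Cp_lt_top hp.le
  -- joint measurability of the kernel
  have h1 : Measurable fun z : Ω × ℝ => W' z.2 z.1 := hW'prod.comp measurable_swap
  have hKm : Measurable fun z : Ω × ℝ => ENNReal.ofReal (|W' z.2 z.1| ^ p / q z.2) :=
    ENNReal.measurable_ofReal.comp ((habs_p.comp h1).div (hqm.comp measurable_snd))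
  -- a.e. equality of the two path integrals
  have hYeq : ∀ᵐ ω ∂μ, (∫⁻ t in Set.Ioc (0:ℝ) 1, ENNReal.ofReal (|W t ω| ^ p / q t))
      = ∫⁻ t in Set.Ioc (0:ℝ) 1, ENNReal.ofReal (|W' t ω| ^ p / q t) :=
    hW'ae.mono fun ω hω => by simp only [hω]
  have hY'meas : Measurable fun ω => ∫⁻ t in Set.Ioc (0:ℝ) 1,
      ENNReal.ofReal (|W' t ω| ^ p / q t) := Measurable.lintegral_prod_right' hKm
  -- the inner Gaussian integral
  have hinner : ∀ t ∈ Set.Ioc (0:ℝ) 1,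
      (∫⁻ ω, ENNReal.ofReal (|W' t ω| ^ p / q t) ∂μ) = ENNReal.ofReal (F t) * Cp := by
    intro t ht
    have hq0 : 0 < q t := hq t ht
    have hsplit : ∀ ω, ENNReal.ofReal (|W' t ω| ^ p / q t)
        = ENNReal.ofReal (|W' t ω| ^ p) * ENNReal.ofReal (q t)⁻¹ := by
      intro ω
      rw [div_eq_mul_inv, ENNReal.ofReal_mul (by positivity)]
    have hmw : Measurable fun ω => ENNReal.ofReal (|W' t ω| ^ p) :=
      hmx.comp (hW'meas t)
    calc ∫⁻ ω, ENNReal.ofReal (|W' t ω| ^ p / q t) ∂μ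
        = ∫⁻ ω, ENNReal.ofReal (|W' t ω| ^ p) * ENNReal.ofReal (q t)⁻¹ ∂μ := by
          simp only [hsplit]
      _ = (∫⁻ ω, ENNReal.ofReal (|W' t ω| ^ p) ∂μ) * ENNReal.ofReal (q t)⁻¹ :=
          lintegral_mul_const _ hmw
      _ = (∫⁻ x, ENNReal.ofReal (|x| ^ p) ∂(μ.map (W' t))) * ENNReal.ofReal (q t)⁻¹ := by
          rw [lintegral_map hmx (hW'meas t)]
      _ = (ENNReal.ofReal (t ^ (p/2)) * Cp) * ENNReal.ofReal (q t)⁻¹ := by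
          rw [hW'map t ht.1.le, gauss_moment ht.1 hp.le]
      _ = ENNReal.ofReal (F t) * Cp := by
          have hFt : ENNReal.ofReal (F t)
              = ENNReal.ofReal (t ^ (p/2)) * ENNReal.ofReal (q t)⁻¹ := by
            rw [hFdef]
            simp only []
            rw [show t ^ (p/2) / q t = t ^ (p/2) * (q t)⁻¹ from div_eq_mul_inv _ _,
              ENNReal.ofReal_mul (Real.rpow_nonneg ht.1.le _)]
          rw [hFt]
          ring
  -- Tonelli
  have hEY : (∫⁻ ω, (∫⁻ t in Set.Ioc (0:ℝ) 1, ENNReal.ofReal (|W' t ω| ^ p / q t)) ∂μ)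
      = (∫⁻ t in Set.Ioc (0:ℝ) 1, ENNReal.ofReal (F t)) * Cp := by
    rw [lintegral_lintegral_swap hKm.aemeasurable]
    rw [setLIntegral_congr_fun measurableSet_Ioc hinner]
    exact lintegral_mul_const _ (ENNReal.measurable_ofReal.comp hFm)
  constructor
  · -- forward direction
    intro hfin
    have hEYfin : (∫⁻ ω, (∫⁻ t in Set.Ioc (0:ℝ) 1,
        ENNReal.ofReal (|W' t ω| ^ p / q t)) ∂μ) < ⊤ := by
      rw [hEY]
      exact ENNReal.mul_lt_top hfin hCptop
    have hae' := ae_lt_top hY'meas hEYfin.ne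
    filter_upwards [hYeq, hae'] with ω h1 h2
    rw [h1]; exact h2
  · -- reverse direction
    intro hae
    by_contra htop
    have hη : etaM F Set.univ = ⊤ := by
      rw [etaM_univ hFm]
      exact top_le_iff.mp (not_lt.mp htop)
    choose B hBmeas hBC hBIoc hB1 hB2 using exists_pieces hFm hη
    have haeY' : ∀ᵐ ω ∂μ, (∫⁻ t in Set.Ioc (0:ℝ) 1,
        ENNReal.ofReal (|W' t ω| ^ p / q t)) < ⊤ := by
      filter_upwards [hae, hYeq] with ω h1 h2
      rw [← h2]; exact h1
    set ρ : ℝ≥0∞ := (gaussianReal 0 1) {x | 1 ≤ |x|} with hρdef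
    set G : ℕ → Ω → ℝ≥0∞ := fun k ω => ∫⁻ t in B k,
      (if Real.sqrt t ≤ |W' t ω| then ENNReal.ofReal (F t) else 0) ∂volume with hGdef
    -- measurability of G k
    have hsetprod : MeasurableSet {z : Ω × ℝ | Real.sqrt z.2 ≤ |W' z.2 z.1|} :=
      measurableSet_le ((Real.continuous_sqrt.measurable).comp measurable_snd) h1.abs
    have hKm2 : Measurable fun z : Ω × ℝ =>
        (if Real.sqrt z.2 ≤ |W' z.2 z.1| then ENNReal.ofReal (F z.2) else 0) :=
      Measurable.ite hsetprod (ENNReal.measurable_ofReal.comp (hFm.comp measurable_snd))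
        measurable_const
    have hGmeas : ∀ k, Measurable (G k) := fun k => Measurable.lintegral_prod_right' hKm2
    -- uniform bound
    have hηB : ∀ k, etaM F (B k) = ∫⁻ t in B k, ENNReal.ofReal (F t) ∂volume := by
      intro k
      rw [etaM_apply hFm (hBmeas k), Set.inter_eq_self_of_subset_left (hBIoc k)]
    have hGle : ∀ k ω, G k ω ≤ 2 := by
      intro k ω
      calc G k ω ≤ ∫⁻ t in B k, ENNReal.ofReal (F t) ∂volume := by
            refine setLIntegral_mono' (hBmeas k) fun t _ => ?_
            split <;> simp
        _ = etaM F (B k) := (hηB k).symm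
        _ ≤ 2 := hB2 k
    -- a.e. convergence to 0
    have hGlim : ∀ᵐ ω ∂μ, Tendsto (fun k => G k ω) atTop (𝓝 0) := by
      filter_upwards [haeY'] with ω hω
      have hWtm : Measurable fun t => W' t ω :=
        hW'prod.comp (measurable_id.prodMk measurable_const)
      set g : ℝ → ℝ≥0∞ := fun t =>
        if Real.sqrt t ≤ |W' t ω| then ENNReal.ofReal (F t) else 0 with hgdef
      have hgm : Measurable g :=
        Measurable.ite (measurableSet_le Real.continuous_sqrt.measurable hWtm.abs)
          (ENNReal.measurable_ofReal.comp hFm) measurable_const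
      set ν : Measure ℝ := (volume.restrict (Set.Ioc (0:ℝ) 1)).withDensity g with hνdef
      have hνap : ∀ {S : Set ℝ}, MeasurableSet S →
          ν S = ∫⁻ t in S ∩ Set.Ioc (0:ℝ) 1, g t ∂volume := by
        intro S hS
        rw [hνdef, withDensity_apply _ hS, Measure.restrict_restrict hS]
      have hνuniv : ν Set.univ < ⊤ := by
        rw [hνap MeasurableSet.univ, Set.univ_inter]
        refine lt_of_le_of_lt ?_ hω
        refine setLIntegral_mono' measurableSet_Ioc fun t ht => ?_
        rw [hgdef]
        simp only []
        split
        · rename_i hcase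
          apply ENNReal.ofReal_le_ofReal
          rw [hFdef]
          simp only []
          have hqt := hq t ht
          have hbase : t ^ (p/2) ≤ |W' t ω| ^ p := by
            have : t ^ (p/2) = (Real.sqrt t) ^ p := by
              rw [Real.sqrt_eq_rpow, ← Real.rpow_mul ht.1.le, one_div, inv_mul_eq_div]
            rw [this]
            exact Real.rpow_le_rpow (Real.sqrt_nonneg t) hcase hp.le
          gcongr
        · exact zero_le
      have hνC : Tendsto (fun k => ν (Cset F k)) atTop (𝓝 (ν (⋂ k, Cset F k))) :=
        tendsto_measure_iInter_atTop
          (fun k => (Cset_meas hFm k).nullMeasurableSet) Cset_anti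
          ⟨0, (lt_of_le_of_lt (measure_mono (Set.subset_univ _)) hνuniv).ne⟩
      have hνCempty : ν (⋂ k, Cset F k) = 0 := by
        have hint : (⋂ k, Cset F k) ∩ Set.Ioc (0:ℝ) 1 = ∅ := by
          apply Set.eq_empty_of_forall_notMem
          rintro t ⟨htC, htIoc⟩
          obtain ⟨k, hk⟩ := Cset_escape (F := F) htIoc
          exact hk (Set.mem_iInter.mp htC k)
        rw [hνap (MeasurableSet.iInter fun k => Cset_meas hFm k), hint]
        simp
      rw [hνCempty] at hνC
      have hGν : ∀ k, G k ω ≤ ν (Cset F k) := by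
        intro k
        have : G k ω = ν (B k) := by
          rw [hνap (hBmeas k), Set.inter_eq_self_of_subset_left (hBIoc k), hGdef]
        rw [this]
        exact measure_mono (hBC k)
      exact tendsto_of_tendsto_of_tendsto_of_le_of_le tendsto_const_nhds hνC
        (fun k => zero_le) hGν
    -- lower bound for the integral of G k
    have hGint : ∀ k, ρ ≤ ∫⁻ ω, G k ω ∂μ := by
      intro k
      have hswap : (∫⁻ ω, G k ω ∂μ) = ∫⁻ t in B k,
          (∫⁻ ω, (if Real.sqrt t ≤ |W' t ω| then ENNReal.ofReal (F t) else 0) ∂μ) ∂volume :=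
        lintegral_lintegral_swap hKm2.aemeasurable
      have hinner2 : ∀ t ∈ B k,
          (∫⁻ ω, (if Real.sqrt t ≤ |W' t ω| then ENNReal.ofReal (F t) else 0) ∂μ)
            = ENNReal.ofReal (F t) * ρ := by
        intro t ht
        have htIoc : t ∈ Set.Ioc (0:ℝ) 1 := hBIoc k ht
        have hsm : MeasurableSet {ω | Real.sqrt t ≤ |W' t ω|} :=
          measurableSet_le measurable_const (hW'meas t).abs
        have : (fun ω => if Real.sqrt t ≤ |W' t ω| then ENNReal.ofReal (F t) else 0)
            = {ω | Real.sqrt t ≤ |W' t ω|}.indicator (fun _ => ENNReal.ofReal (F t)) := by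
          funext ω
          rw [Set.indicator_apply]
          rfl
        rw [this, lintegral_indicator hsm, setLIntegral_const]
        congr 1
        have hpre : {ω | Real.sqrt t ≤ |W' t ω|} = (W' t) ⁻¹' {x | Real.sqrt t ≤ |x|} := rfl
        rw [hpre, ← Measure.map_apply (hW'meas t)
          (measurableSet_le measurable_const measurable_abs), hW'map t htIoc.1.le,
          gauss_tail htIoc.1, hρdef]
      calc ρ = 1 * ρ := (one_mul ρ).symm
        _ ≤ etaM F (B k) * ρ := by gcongr; exact hB1 k
        _ = (∫⁻ t in B k, ENNReal.ofReal (F t) ∂volume) * ρ := by rw [hηB k]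
        _ = ∫⁻ t in B k, ENNReal.ofReal (F t) * ρ ∂volume :=
            (lintegral_mul_const _ (ENNReal.measurable_ofReal.comp hFm)).symm
        _ = ∫⁻ t in B k, (∫⁻ ω, (if Real.sqrt t ≤ |W' t ω|
              then ENNReal.ofReal (F t) else 0) ∂μ) ∂volume :=
            (setLIntegral_congr_fun (hBmeas k) hinner2).symm
        _ = ∫⁻ ω, G k ω ∂μ := hswap.symm
    -- dominated convergence
    have htend : Tendsto (fun k => ∫⁻ ω, G k ω ∂μ) atTop (𝓝 0) := by
      have htend0 : Tendsto (fun k => ∫⁻ ω, G k ω ∂μ) atTop (𝓝 (∫⁻ (_ : Ω), (0:ℝ≥0∞) ∂μ)) := by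
        refine tendsto_lintegral_of_dominated_convergence (fun _ => 2) hGmeas
          (fun k => ae_of_all _ fun ω => hGle k ω) ?_ hGlim
        simp [lintegral_const]
      simpa using htend0
    have : ρ ≤ 0 := ge_of_tendsto' htend hGint
    have hρpos : 0 < ρ := gauss_tail_pos
    exact absurd (le_antisymm this zero_le) hρpos.ne'
end

section
/- Let X be a symmetric random variable with E[X² 1_{|X|≤x}] = 0 for x ≤ 1 and l(x) = E[X² 1_{|X|≤x}] ~ exp((log x)^α) as x → ∞ for fixed 0 < α < 1. Then, with η_j = inf{s ≥ b+1 : l(s)/s² ≤ 1/j}, for all sufficiently large n one has η_n ≥ √n and max_{1≤j≤√n} η_j ≤ n^{3/10}, and consequently max_{1≤j≤√n} l(η_j)/l(η_n) ≤ 2·exp((0.3^α − 0.5^α)(log n)^α) → 0 as n → ∞. -/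
open MeasureTheory Filter Set ProbabilityTheory BoundedContinuousFunction

variable {Ω : Type*} [MeasurableSpace Ω]

/-- The truncated second moment `l(x) = E[X² 1_{|X| ≤ x}]`. -/
noncomputable def truncMom (μ : Measure Ω) (X : Ω → ℝ) (x : ℝ) : ℝ :=
  ∫ ω in {ω | |X ω| ≤ x}, (X ω)^2 ∂μ

/-- `b = inf {x ≥ 1 : l(x) > 0}`. -/
noncomputable def bCon (μ : Measure Ω) (X : Ω → ℝ) : ℝ :=
  sInf {x : ℝ | 1 ≤ x ∧ 0 < truncMom μ X x}

/-- `η_j = inf {s ≥ b+1 : l(s)/s² ≤ 1/j}`. -/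
noncomputable def eta (μ : Measure Ω) (X : Ω → ℝ) (j : ℕ) : ℝ :=
  sInf {s : ℝ | bCon μ X + 1 ≤ s ∧ truncMom μ X s / s^2 ≤ 1 / (j:ℝ)}

lemma truncMom_nonneg (μ : Measure Ω) (X : Ω → ℝ) (x : ℝ) : 0 ≤ truncMom μ X x :=
  integral_nonneg fun _ => sq_nonneg _

lemma integrableOn_sq (μ : Measure Ω) [IsFiniteMeasure μ] (X : Ω → ℝ)
    (hmeas : Measurable X) (x : ℝ) :
    IntegrableOn (fun ω => (X ω)^2) {ω | |X ω| ≤ x} μ := by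
  have hs : MeasurableSet {ω | |X ω| ≤ x} := measurableSet_le hmeas.abs measurable_const
  refine Measure.integrableOn_of_bounded (M := x^2) (measure_ne_top _ _)
    ((hmeas.pow_const 2).aestronglyMeasurable) ?_
  filter_upwards [ae_restrict_mem hs] with ω hω
  rw [Real.norm_eq_abs, abs_of_nonneg (sq_nonneg _), ← sq_abs]
  have h0 : (0:ℝ) ≤ |X ω| := abs_nonneg _
  nlinarith [hω]

lemma truncMom_mono (μ : Measure Ω) [IsFiniteMeasure μ] (X : Ω → ℝ)
    (hmeas : Measurable X) : Monotone (truncMom μ X) := by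
  intro x y hxy
  apply setIntegral_mono_set (integrableOn_sq μ X hmeas y)
    (Eventually.of_forall fun ω => sq_nonneg _)
  exact HasSubset.Subset.eventuallyLE fun ω hω => le_trans hω hxy

set_option maxHeartbeats 1000000 in
/-- For the symmetric example with `l(x) ~ exp((log x)^α)`, `0 < α < 1`:
eventually `η_n ≥ √n`, `max_{1≤j≤√n} η_j ≤ n^{3/10}`, and consequently
`max_{1≤j≤√n} l(η_j)/l(η_n) ≤ 2 exp((0.3^α − 0.5^α)(log n)^α) → 0`. -/
theorem stmt15 (μ : Measure Ω) [IsProbabilityMeasure μ] (X : Ω → ℝ)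
    (hmeas : Measurable X)
    (hsym : μ.map X = μ.map (fun ω => -X ω))
    (α : ℝ) (hα : α ∈ Set.Ioo (0:ℝ) 1)
    (hzero : ∀ x : ℝ, x ≤ 1 → truncMom μ X x = 0)
    (hasymp : Tendsto (fun x : ℝ => truncMom μ X x / Real.exp (Real.log x ^ α))
      atTop (nhds 1)) :
    (∀ᶠ n : ℕ in atTop,
      Real.sqrt n ≤ eta μ X n ∧
      ∀ j : ℕ, 1 ≤ j → (j:ℝ) ≤ Real.sqrt n →
        eta μ X j ≤ (n:ℝ) ^ ((3:ℝ)/10) ∧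
        truncMom μ X (eta μ X j) / truncMom μ X (eta μ X n) ≤
          2 * Real.exp (((0.3:ℝ) ^ α - (0.5:ℝ) ^ α) * Real.log n ^ α)) ∧
    Tendsto (fun n : ℕ =>
        2 * Real.exp (((0.3:ℝ) ^ α - (0.5:ℝ) ^ α) * Real.log n ^ α))
      atTop (nhds 0) := by
  obtain ⟨hα0, hα1⟩ := hα
  have hmono : Monotone (truncMom μ X) := truncMom_mono μ X hmeas
  have hnn : ∀ x, 0 ≤ truncMom μ X x := truncMom_nonneg μ X
  -- eventual two-sided bounds from the asymptotics
  have hbd : ∀ᶠ x : ℝ in atTop,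
      (3/4) * Real.exp (Real.log x ^ α) ≤ truncMom μ X x ∧
      truncMom μ X x ≤ (5/4) * Real.exp (Real.log x ^ α) := by
    have h1 := hasymp.eventually (eventually_gt_nhds (show (3/4:ℝ) < 1 by norm_num))
    have h2 := hasymp.eventually (eventually_lt_nhds (show (1:ℝ) < 5/4 by norm_num))
    filter_upwards [h1, h2] with x hx1 hx2
    have hE : (0:ℝ) < Real.exp (Real.log x ^ α) := Real.exp_pos _
    constructor
    · exact le_of_lt ((lt_div_iff₀ hE).1 hx1)
    · exact le_of_lt ((div_lt_iff₀ hE).1 hx2)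
  have hEtop : Tendsto (fun x : ℝ => Real.exp (Real.log x ^ α)) atTop atTop :=
    Real.tendsto_exp_atTop.comp ((tendsto_rpow_atTop hα0).comp Real.tendsto_log_atTop)
  obtain ⟨M₀, hM₀⟩ := eventually_atTop.1 (hbd.and (hEtop.eventually_ge_atTop 2))
  set M : ℝ := max M₀ (Real.exp 1) with hMdef
  have hMkey : ∀ x, M ≤ x →
      (3/4) * Real.exp (Real.log x ^ α) ≤ truncMom μ X x ∧
      truncMom μ X x ≤ (5/4) * Real.exp (Real.log x ^ α) ∧
      2 ≤ Real.exp (Real.log x ^ α) := by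
    intro x hx
    have h := hM₀ x (le_trans (le_max_left _ _) hx)
    exact ⟨h.1.1, h.1.2, h.2⟩
  have hMe : Real.exp 1 ≤ M := le_max_right _ _
  have hM1 : (1:ℝ) ≤ M := by
    have := Real.add_one_le_exp (1:ℝ); linarith
  have hMpos : (0:ℝ) < M := lt_of_lt_of_le one_pos hM1
  have hlMpos : (0:ℝ) < truncMom μ X M := by
    obtain ⟨h1, _, h3⟩ := hMkey M le_rfl
    nlinarith
  -- facts about b
  have hbSet_ne : Set.Nonempty {x : ℝ | 1 ≤ x ∧ 0 < truncMom μ X x} := ⟨M, hM1, hlMpos⟩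
  have hb_bdd : BddBelow {x : ℝ | 1 ≤ x ∧ 0 < truncMom μ X x} := ⟨1, fun y hy => hy.1⟩
  have hb_le : bCon μ X ≤ M := csInf_le hb_bdd ⟨hM1, hlMpos⟩
  have hb_ge : 1 ≤ bCon μ X := le_csInf hbSet_ne fun y hy => hy.1
  have hc : 0 < truncMom μ X (bCon μ X + 1) := by
    obtain ⟨y, hy, hylt⟩ := exists_lt_of_csInf_lt hbSet_ne (lt_add_one (bCon μ X))
    exact lt_of_lt_of_le hy.2 (hmono hylt.le)
  set c : ℝ := truncMom μ X (bCon μ X + 1) with hcdef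
  -- linear upper bound
  have hlin : ∀ x, M ≤ x → truncMom μ X x ≤ (5/4) * x := by
    intro x hx
    have h := (hMkey x hx).2.1
    have hx1 : 1 ≤ Real.log x := by
      calc (1:ℝ) = Real.log (Real.exp 1) := (Real.log_exp 1).symm
        _ ≤ Real.log x := Real.log_le_log (Real.exp_pos 1) (hMe.trans hx)
    have hEx : Real.exp (Real.log x ^ α) ≤ x := by
      have h2 : Real.log x ^ α ≤ Real.log x := by
        calc Real.log x ^ α ≤ Real.log x ^ (1:ℝ) :=
              Real.rpow_le_rpow_of_exponent_le hx1 hα1.le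
          _ = Real.log x := Real.rpow_one _
      calc Real.exp (Real.log x ^ α) ≤ Real.exp (Real.log x) := Real.exp_le_exp.2 h2
        _ = x := Real.exp_log (lt_of_lt_of_le hMpos hx)
    nlinarith
  -- eventual domination of t^α by t/10
  have hdom : ∀ᶠ t : ℝ in atTop, Real.log (5/4) + t ^ α ≤ t / 10 := by
    have h1 : Tendsto (fun t : ℝ => t ^ (α - 1)) atTop (nhds 0) := by
      have := tendsto_rpow_neg_atTop (y := 1 - α) (by linarith)
      simpa [neg_sub] using this
    filter_upwards [h1.eventually (eventually_le_nhds (show (0:ℝ) < 1/20 by norm_num)),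
      eventually_ge_atTop (20:ℝ)] with t h1t h2t
    have ht0 : (0:ℝ) < t := by linarith
    have htα : t ^ α ≤ t / 20 := by
      have he : t ^ α = t ^ (α - 1) * t := by
        rw [← Real.rpow_add_one ht0.ne' (α - 1)]; norm_num
      rw [he]
      calc t ^ (α - 1) * t ≤ (1/20) * t := mul_le_mul_of_nonneg_right h1t ht0.le
        _ = t / 20 := by ring
    have hlog54 : Real.log (5/4) ≤ 1 := by
      have := Real.log_le_sub_one_of_pos (show (0:ℝ) < 5/4 by norm_num)
      linarith
    linarith
  have hncast : Tendsto (fun n : ℕ => (n:ℝ)) atTop atTop := tendsto_natCast_atTop_atTop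
  have hlogn : Tendsto (fun n : ℕ => Real.log n) atTop atTop :=
    Real.tendsto_log_atTop.comp hncast
  have hrpow : Tendsto (fun n : ℕ => (n:ℝ) ^ ((3:ℝ)/10)) atTop atTop :=
    (tendsto_rpow_atTop (by norm_num)).comp hncast
  constructor
  · filter_upwards [hncast.eventually_ge_atTop (M^2 / c), hncast.eventually_ge_atTop 1,
      hncast.eventually_ge_atTop (M^2), hrpow.eventually_ge_atTop (M+1),
      hlogn.eventually hdom, hlogn.eventually_ge_atTop 0] with n hn1 hn2 hn3 hn4 hn5 hn6
    have npos : (0:ℝ) < n := lt_of_lt_of_le one_pos hn2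
    -- the eta_n set is nonempty
    have hSne : (max (M+1) (2*(n:ℝ))) ∈
        {s : ℝ | bCon μ X + 1 ≤ s ∧ truncMom μ X s / s^2 ≤ 1 / (n:ℝ)} := by
      constructor
      · calc bCon μ X + 1 ≤ M + 1 := by linarith
          _ ≤ _ := le_max_left _ _
      · set x := max (M+1) (2*(n:ℝ)) with hxdef
        have hx2n : 2*(n:ℝ) ≤ x := le_max_right _ _
        have hxM : M ≤ x := le_trans (by linarith) (le_max_left _ _)
        have hxpos : (0:ℝ) < x := by nlinarith
        have hlx := hlin x hxM
        rw [div_le_div_iff₀ (by positivity) npos]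
        nlinarith [hnn x, mul_le_mul_of_nonneg_right hlx npos.le,
          mul_le_mul_of_nonneg_right hx2n hxpos.le]
    -- claim 1 : √n ≤ η_n
    have hclaim1 : Real.sqrt n ≤ eta μ X n := by
      apply le_csInf ⟨_, hSne⟩
      rintro s ⟨hs1, hs2⟩
      by_contra hcon
      push_neg at hcon
      have hspos : (0:ℝ) < s := by linarith
      have hs2n : s^2 < n := by
        have h := Real.sq_sqrt npos.le
        nlinarith [Real.sqrt_nonneg (n:ℝ)]
      rw [div_le_div_iff₀ (by positivity) npos] at hs2
      rcases le_or_gt M s with hMs | hsM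
      · obtain ⟨h1, _, h3⟩ := hMkey s hMs
        have hls : (3:ℝ)/2 ≤ truncMom μ X s := by nlinarith
        nlinarith [mul_le_mul_of_nonneg_right hls npos.le]
      · have hcs : c ≤ truncMom μ X s := hmono (by linarith : bCon μ X + 1 ≤ s)
        have hMc : M^2 ≤ c * n := by
          rw [div_le_iff₀ hc] at hn1; nlinarith
        nlinarith [mul_le_mul_of_nonneg_right hcs npos.le,
          mul_pos (sub_pos.2 hsM) (show (0:ℝ) < M + s by linarith)]
    refine ⟨hclaim1, ?_⟩
    intro j hj1 hj2
    set P : ℝ := (n:ℝ) ^ ((3:ℝ)/10) with hPdef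
    set L : ℝ := Real.log n ^ α with hLdef
    have hPpos : (0:ℝ) < P := Real.rpow_pos_of_pos npos _
    have hLP : Real.log P ^ α = (0.3:ℝ)^α * L := by
      rw [hPdef, Real.log_rpow npos,
        show ((3:ℝ)/10) = (0.3:ℝ) by norm_num, Real.mul_rpow (by norm_num) hn6]
    have hlP_le : truncMom μ X P ≤ (5/4) * Real.exp ((0.3:ℝ)^α * L) := by
      have h := (hMkey P (by linarith)).2.1
      rwa [hLP] at h
    have h03le1 : (0.3:ℝ)^α ≤ 1 := Real.rpow_le_one (by norm_num) (by norm_num) hα0.le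
    have hLnn : 0 ≤ L := Real.rpow_nonneg hn6 α
    have hlP_le' : truncMom μ X P ≤ (n:ℝ) ^ ((1:ℝ)/10) := by
      calc truncMom μ X P ≤ (5/4) * Real.exp ((0.3:ℝ)^α * L) := hlP_le
        _ ≤ (5/4) * Real.exp L := by
            have : (0.3:ℝ)^α * L ≤ L := by nlinarith
            nlinarith [Real.exp_le_exp.2 this, Real.exp_pos ((0.3:ℝ)^α * L)]
        _ = Real.exp (Real.log (5/4) + L) := by
            rw [Real.exp_add, Real.exp_log (show (0:ℝ) < 5/4 by norm_num)]
        _ ≤ Real.exp (Real.log n / 10) := Real.exp_le_exp.2 hn5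
        _ = (n:ℝ) ^ ((1:ℝ)/10) := by
            rw [Real.rpow_def_of_pos npos]; congr 1; ring
    have hjpos : (0:ℝ) < (j:ℝ) := by exact_mod_cast hj1
    have hmemP : P ∈ {s : ℝ | bCon μ X + 1 ≤ s ∧ truncMom μ X s / s^2 ≤ 1 / (j:ℝ)} := by
      refine ⟨by linarith, ?_⟩
      rw [div_le_div_iff₀ (by positivity) hjpos]
      have hP2 : P^2 = (n:ℝ) ^ ((3:ℝ)/5) := by
        rw [hPdef, ← Real.rpow_natCast ((n:ℝ) ^ ((3:ℝ)/10)) 2, ← Real.rpow_mul npos.le]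
        norm_num
      have hsqrtn : Real.sqrt n = (n:ℝ) ^ ((1:ℝ)/2) := Real.sqrt_eq_rpow _
      rw [hP2, one_mul]
      calc truncMom μ X P * j ≤ (n:ℝ)^((1:ℝ)/10) * (n:ℝ)^((1:ℝ)/2) := by
            apply mul_le_mul hlP_le' (by rw [← hsqrtn]; exact hj2) hjpos.le (by positivity)
        _ = (n:ℝ)^((3:ℝ)/5) := by rw [← Real.rpow_add npos]; norm_num
    have hclaim2 : eta μ X j ≤ P := csInf_le ⟨bCon μ X + 1, fun s hs => hs.1⟩ hmemP
    refine ⟨hclaim2, ?_⟩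
    -- claim 3
    have hsqn : M ≤ Real.sqrt n := by
      rw [show M = Real.sqrt (M^2) from (Real.sqrt_sq hMpos.le).symm]
      exact Real.sqrt_le_sqrt hn3
    have hden : (3/4) * Real.exp ((0.5:ℝ)^α * L) ≤ truncMom μ X (eta μ X n) := by
      have h1 := (hMkey _ hsqn).1
      have h2 : Real.log (Real.sqrt n) ^ α = (0.5:ℝ)^α * L := by
        rw [Real.log_sqrt npos.le, show Real.log n / 2 = (0.5:ℝ) * Real.log n by ring,
          Real.mul_rpow (by norm_num) hn6]
      rw [h2] at h1
      exact h1.trans (hmono hclaim1)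
    have hnum : truncMom μ X (eta μ X j) ≤ (5/4) * Real.exp ((0.3:ℝ)^α * L) :=
      (hmono hclaim2).trans hlP_le
    have hdpos : (0:ℝ) < (3/4) * Real.exp ((0.5:ℝ)^α * L) := by positivity
    calc truncMom μ X (eta μ X j) / truncMom μ X (eta μ X n)
        ≤ ((5/4) * Real.exp ((0.3:ℝ)^α * L)) / ((3/4) * Real.exp ((0.5:ℝ)^α * L)) :=
          div_le_div₀ (by positivity) hnum hdpos hden
      _ = (5/3) * Real.exp (((0.3:ℝ)^α - (0.5:ℝ)^α) * L) := by
          rw [sub_mul, Real.exp_sub]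
          field_simp
      _ ≤ 2 * Real.exp (((0.3:ℝ)^α - (0.5:ℝ)^α) * L) := by
          have := Real.exp_pos (((0.3:ℝ)^α - (0.5:ℝ)^α) * L)
          nlinarith
  · have hneg : (0.3:ℝ)^α - (0.5:ℝ)^α < 0 :=
      sub_neg.2 (Real.rpow_lt_rpow (by norm_num) (by norm_num) hα0)
    have hL : Tendsto (fun n : ℕ => Real.log n ^ α) atTop atTop :=
      ((tendsto_rpow_atTop hα0).comp Real.tendsto_log_atTop).comp hncast
    have h2 : Tendsto (fun n : ℕ => ((0.3:ℝ)^α - (0.5:ℝ)^α) * Real.log n ^ α) atTop atBot :=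
      hL.const_mul_atTop_of_neg hneg
    have h3 := Real.tendsto_exp_atBot.comp h2
    have h4 := h3.const_mul (2:ℝ)
    simpa using h4
end

section
/- Let W be a standard Wiener process and q ∈ Q with I(q,c) < ∞ for some c > 0. Then as n → ∞, n^{-1/2} sup_{1/n ≤ t ≤ 1} |W(⌊nt⌋) − W(nt)|/q(t) → 0 in probability. -/
open MeasureTheory Filter Set ProbabilityTheory

section AuxStmt18
open Real

open scoped NNReal ENNReal

lemma gaussian_tail {Ω : Type*} [MeasurableSpace Ω] (μ : Measure Ω)
    (Y : Ω → ℝ) (hY : Measurable Y) (v : ℝ≥0) (hv : (v:ℝ) ≤ 1)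
    (hmap : μ.map Y = gaussianReal 0 v) (b : ℝ) (hb : 0 < b) :
    μ {ω | b < |Y ω|} ≤ ENNReal.ofReal (Real.sqrt 2 * Real.exp (-b^2/4)) := by
  have hset : MeasurableSet {x : ℝ | b < |x|} :=
    measurableSet_lt measurable_const measurable_abs
  have h1 : μ {ω | b < |Y ω|} = (μ.map Y) {x : ℝ | b < |x|} := by
    rw [Measure.map_apply hY hset]; rfl
  rw [h1, hmap]
  rcases eq_or_ne v 0 with hv0 | hv0
  · subst hv0
    rw [gaussianReal_zero_var, Measure.dirac_apply' _ hset]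
    simp only [Set.indicator_apply, Set.mem_setOf_eq, abs_zero]
    rw [if_neg (by simp [not_lt, hb.le])]
    exact zero_le
  · have hvpos : (0:ℝ) < (v:ℝ) := lt_of_le_of_ne (v.coe_nonneg) (by exact_mod_cast (Ne.symm hv0))
    rw [gaussianReal_apply _ hv0]
    have hfour : (0:ℝ) < (4 * (v:ℝ))⁻¹ := by positivity
    set C : ℝ := (Real.sqrt (2 * π * v))⁻¹ * Real.exp (-b^2/(4*v)) with hC
    have hCnn : 0 ≤ C := by positivity
    have hbound : ∫⁻ x in {x : ℝ | b < |x|}, gaussianPDF 0 v x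
        ≤ ∫⁻ x, ENNReal.ofReal (C * Real.exp (-(4*(v:ℝ))⁻¹ * x^2)) := by
      refine le_trans (setLIntegral_mono (by fun_prop) ?_) (setLIntegral_le_lintegral _ _)
      intro x hx
      simp only [Set.mem_setOf_eq] at hx
      rw [gaussianPDF]
      apply ENNReal.ofReal_le_ofReal
      rw [gaussianPDFReal]
      have hx2 : b^2 ≤ x^2 := by
        have := abs_nonneg x
        nlinarith [sq_abs x]
      have hexp : Real.exp (-(x - 0)^2/(2*v)) ≤ Real.exp (-b^2/(4*v)) * Real.exp (-(4*(v:ℝ))⁻¹ * x^2) := by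
        rw [← Real.exp_add]
        apply Real.exp_le_exp.2
        rw [← sub_nonneg]
        have h4 : (0:ℝ) < 4 * (v:ℝ) := by positivity
        have heq : (-b^2/(4*(v:ℝ)) + -(4*(v:ℝ))⁻¹*x^2) - (-(x-0)^2/(2*(v:ℝ)))
            = (x^2 - b^2)/(4*(v:ℝ)) := by field_simp; ring
        rw [heq]
        exact div_nonneg (by linarith) h4.le
      calc (Real.sqrt (2 * π * v))⁻¹ * Real.exp (-(x - 0)^2/(2*v))
          ≤ (Real.sqrt (2 * π * v))⁻¹ * (Real.exp (-b^2/(4*v)) * Real.exp (-(4*(v:ℝ))⁻¹ * x^2)) := by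
            apply mul_le_mul_of_nonneg_left hexp (by positivity)
        _ = C * Real.exp (-(4*(v:ℝ))⁻¹ * x^2) := by rw [hC]; ring
    refine hbound.trans ?_
    have hint : Integrable (fun x : ℝ => C * Real.exp (-(4*(v:ℝ))⁻¹ * x^2)) := by
      exact (integrable_exp_neg_mul_sq hfour).const_mul C
    rw [← ofReal_integral_eq_lintegral_ofReal hint (ae_of_all _ (fun x => by positivity))]
    apply ENNReal.ofReal_le_ofReal
    rw [integral_const_mul, integral_gaussian]
    have hsqrtpos : (0:ℝ) < Real.sqrt (2 * π * v) := Real.sqrt_pos.2 (by positivity)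
    have hsqrt : Real.sqrt (π / (4*(v:ℝ))⁻¹) = Real.sqrt 2 * Real.sqrt (2 * π * v) := by
      rw [← Real.sqrt_mul (by norm_num : (0:ℝ) ≤ 2)]
      congr 1
      field_simp
      ring
    rw [hC, hsqrt]
    have hexple : Real.exp (-b^2/(4*(v:ℝ))) ≤ Real.exp (-b^2/4) := by
      apply Real.exp_le_exp.2
      rw [neg_div, neg_div, neg_le_neg_iff]
      apply div_le_div_of_nonneg_left (by positivity) (by positivity)
      nlinarith
    calc (Real.sqrt (2 * π * ↑v))⁻¹ * Real.exp (-b ^ 2 / (4 * ↑v)) * (Real.sqrt 2 * Real.sqrt (2 * π * ↑v))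
        = Real.sqrt 2 * Real.exp (-b^2/(4*(v:ℝ))) := by field_simp
      _ ≤ Real.sqrt 2 * Real.exp (-b^2/4) := by
          apply mul_le_mul_of_nonneg_left hexple (Real.sqrt_nonneg _)

lemma finite_max_bound {Ω : Type*} [MeasurableSpace Ω] (μ : Measure Ω)
    [IsProbabilityMeasure μ] (W : ℝ → Ω → ℝ) (hW : IsStandardBM μ W)
    (u : ℝ) (hu : 0 ≤ u) (M : ℕ) (hM : 0 < M) (a : ℝ) (ha : 0 < a)
    (ha2 : Real.sqrt 2 * Real.exp (-(a/2)^2/4) ≤ 1/2) :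
    μ {ω | ∃ j ≤ M, a < |W (u + (j:ℝ)/(M:ℝ)) ω - W u ω|} ≤
      ENNReal.ofReal (2 * (Real.sqrt 2 * Real.exp (-(a/2)^2/4))) := by
  classical
  set K : ℝ := Real.sqrt 2 * Real.exp (-(a/2)^2/4) with hK
  have hKnn : 0 ≤ K := by positivity
  have hMpos : (0:ℝ) < (M:ℝ) := by exact_mod_cast hM
  set t : ℕ → ℝ := fun i => u + (i:ℝ)/(M:ℝ) with htdef
  have ht0 : t 0 = u := by simp [htdef]
  have htmono : Monotone t := by
    intro i j hij
    simp only [htdef]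
    have hij' : (i:ℝ) ≤ (j:ℝ) := by exact_mod_cast hij
    gcongr
  have htnn : ∀ i, 0 ≤ t i := fun i => add_nonneg hu (by positivity)
  set ts : Fin (M+1) → ℝ := fun i => t i with htsdef
  have hIndep := hW.indep M ts (fun i j hij => htmono (by exact_mod_cast hij))
    (fun i => htnn _)
  set Y : Fin M → Ω → ℝ := fun i ω => W (ts i.succ) ω - W (ts i.castSucc) ω with hYdef
  have hYmeas : ∀ i, Measurable (Y i) := fun i => (hW.meas _).sub (hW.meas _)
  have hYeq : ∀ (i : Fin M) (ω : Ω), Y i ω = W (t ((i:ℕ)+1)) ω - W (t (i:ℕ)) ω := by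
    intro i ω
    simp only [hYdef, htsdef, Fin.val_succ, Fin.coe_castSucc]
  set S : ℕ → Ω → ℝ := fun j ω => W (t j) ω - W u ω with hSdef
  have hSsum : ∀ (j : ℕ) (ω : Ω),
      S j ω = ∑ i ∈ Finset.range j, (W (t (i+1)) ω - W (t i) ω) := by
    intro j ω
    rw [Finset.sum_range_sub (fun i => W (t i) ω) j]
    simp [hSdef, ht0]
  have hSmeas : ∀ j, Measurable (S j) := fun j => (hW.meas _).sub (hW.meas _)
  set G : ℕ → Set Ω := fun j => {ω | a < |S j ω|} with hGdef
  have hGmeas : ∀ j, MeasurableSet (G j) :=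
    fun j => measurableSet_lt measurable_const (hSmeas j).abs
  set T : ℕ → Set Ω := fun j => G j ∩ ⋂ i ∈ Finset.range j, (G i)ᶜ with hTdef
  have hTmeas : ∀ j, MeasurableSet (T j) := by
    intro j
    exact (hGmeas j).inter (MeasurableSet.biInter (Finset.range j).countable_toSet
      (fun i _ => (hGmeas i).compl))
  have hTsubG : ∀ j, T j ⊆ G j := fun j => Set.inter_subset_left
  have htarget : {ω | ∃ j ≤ M, a < |W (u + (j:ℝ)/(M:ℝ)) ω - W u ω|}
      = ⋃ j ∈ Finset.range (M+1), G j := by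
    ext ω
    simp only [Set.mem_setOf_eq, Set.mem_iUnion, Finset.mem_range, Nat.lt_succ_iff, hGdef,
      hSdef, htdef, exists_prop]
  have hGT : ⋃ j ∈ Finset.range (M+1), G j = ⋃ j ∈ Finset.range (M+1), T j := by
    apply Set.Subset.antisymm
    · intro ω hω
      simp only [Set.mem_iUnion, Finset.mem_range, exists_prop] at hω ⊢
      obtain ⟨j, hjM, hj⟩ := hω
      have hex : ∃ i, ω ∈ G i := ⟨j, hj⟩
      refine ⟨Nat.find hex, lt_of_le_of_lt (Nat.find_min' hex hj) hjM, ?_⟩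
      refine ⟨Nat.find_spec hex, ?_⟩
      simp only [Set.mem_iInter, Finset.mem_range, Set.mem_compl_iff]
      intro i hi
      exact Nat.find_min hex hi
    · exact Set.iUnion₂_mono fun j _ => hTsubG j
  set C : ℕ → Set Ω := fun j => {ω | |W (t M) ω - W (t j) ω| ≤ a/2} with hCdef
  have hCmeas : ∀ j, MeasurableSet (C j) :=
    fun j => measurableSet_le ((hW.meas _).sub (hW.meas _)).abs measurable_const
  -- tail bound for W (t M) - W (t j)
  have htail : ∀ j ≤ M, μ {ω | a/2 < |W (t M) ω - W (t j) ω|} ≤ ENNReal.ofReal K := by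
    intro j hj
    have hmap := hW.gauss (t j) (t M) (htnn j) (htmono hj)
    have hvle : ((Real.toNNReal (t M - t j) : ℝ≥0) : ℝ) ≤ 1 := by
      rw [Real.coe_toNNReal']
      have hle : t M - t j ≤ 1 := by
        simp only [htdef]
        have hjnn : (0:ℝ) ≤ (j:ℝ)/(M:ℝ) := by positivity
        have heq : u + (M:ℝ)/(M:ℝ) - (u + (j:ℝ)/(M:ℝ)) = 1 - (j:ℝ)/(M:ℝ) := by
          field_simp
          ring
        rw [heq]; linarith
      exact max_le hle zero_le_one
    exact gaussian_tail μ _ ((hW.meas _).sub (hW.meas _)) _ hvle hmap (a/2) (half_pos ha)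
  have hChalf : ∀ j ≤ M, (2⁻¹ : ℝ≥0∞) ≤ μ (C j) := by
    intro j hj
    have hcompl : (C j)ᶜ = {ω | a/2 < |W (t M) ω - W (t j) ω|} := by
      ext ω; simp [hCdef, not_le]
    have h1 : μ (C j)ᶜ ≤ 2⁻¹ := by
      rw [hcompl]
      refine (htail j hj).trans ?_
      refine le_trans (ENNReal.ofReal_le_ofReal ha2) ?_
      rw [show (1/2 : ℝ) = (2⁻¹ : ℝ) by norm_num]
      rw [ENNReal.ofReal_inv_of_pos (by norm_num)]
      simp
    have h2 : μ (C j) = 1 - μ (C j)ᶜ := by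
      rw [← prob_compl_eq_one_sub (hCmeas j).compl, compl_compl]
    rw [h2]
    calc (2⁻¹ : ℝ≥0∞) = 1 - 2⁻¹ := ENNReal.one_sub_inv_two.symm
      _ ≤ 1 - μ (C j)ᶜ := tsub_le_tsub_left h1 1
  -- independence of T j and C j
  have hkey : ∀ j ≤ M, μ (T j ∩ C j) = μ (T j) * μ (C j) := by
    intro j hj
    set Sl : Finset (Fin M) := Finset.univ.filter (fun i => (i:ℕ) < j) with hSl
    set Tl : Finset (Fin M) := Finset.univ.filter (fun i => j ≤ (i:ℕ)) with hTl
    have hdisj : Disjoint Sl Tl := by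
      rw [Finset.disjoint_left]
      intro i hiS hiT
      simp only [hSl, hTl, Finset.mem_filter] at hiS hiT
      omega
    have hIF := hIndep.indepFun_finset Sl Tl hdisj hYmeas
    set F : ℕ → ((i : Sl) → ℝ) → ℝ :=
      fun l y => ∑ i : Sl, if ((i : Fin M) : ℕ) < l then y i else 0 with hF
    have hFmeas : ∀ l, Measurable (F l) := by
      intro l
      apply Finset.measurable_sum
      intro i _
      by_cases h : ((i : Fin M) : ℕ) < l
      · simpa [h] using measurable_pi_apply i
      · simpa [h] using measurable_const
    have hFS : ∀ l ≤ j, ∀ ω : Ω, F l (fun i : Sl => Y i ω) = S l ω := by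
      intro l hl ω
      have h1 : F l (fun i : Sl => Y i ω)
          = ∑ i ∈ Sl, if (i:ℕ) < l then Y i ω else 0 :=
        Finset.sum_coe_sort Sl (fun i => if (i:ℕ) < l then Y i ω else 0)
      have h2 : ∑ i ∈ Sl, (if (i:ℕ) < l then Y i ω else 0)
          = ∑ i : Fin M, (if (i:ℕ) < l then Y i ω else 0) := by
        rw [hSl]
        apply Finset.sum_filter_of_ne
        intro i _ hne
        by_cases h : (i:ℕ) < l
        · omega
        · simp [h] at hne
      have h3 : ∑ i : Fin M, (if (i:ℕ) < l then Y i ω else 0)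
          = ∑ i ∈ Finset.range M,
              (if i < l then (W (t (i+1)) ω - W (t i) ω) else 0) := by
        rw [← Fin.sum_univ_eq_sum_range
          (fun i => if i < l then (W (t (i+1)) ω - W (t i) ω) else 0) M]
        apply Finset.sum_congr rfl
        intro i _
        by_cases h : (i:ℕ) < l <;> simp [h, hYeq i ω]
      have h4 : ∑ i ∈ Finset.range M,
            (if i < l then (W (t (i+1)) ω - W (t i) ω) else 0)
          = ∑ i ∈ Finset.range l, (W (t (i+1)) ω - W (t i) ω) := by
        rw [← Finset.sum_filter]
        apply Finset.sum_congr ?_ (fun _ _ => rfl)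
        ext k
        simp only [Finset.mem_filter, Finset.mem_range]
        omega
      rw [h1, h2, h3, h4, ← hSsum l ω]
    have hCsum : ∀ ω : Ω, (∑ i : Tl, Y i ω) = W (t M) ω - W (t j) ω := by
      intro ω
      have h1 : (∑ i : Tl, Y i ω) = ∑ i ∈ Tl, Y i ω :=
        Finset.sum_coe_sort Tl (fun i => Y i ω)
      have h2 : ∑ i ∈ Tl, Y i ω
          = ∑ i : Fin M, (if j ≤ (i:ℕ) then Y i ω else 0) := by
        rw [hTl, Finset.sum_filter]
      have h3 : ∑ i : Fin M, (if j ≤ (i:ℕ) then Y i ω else 0)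
          = ∑ i ∈ Finset.range M,
              (if j ≤ i then (W (t (i+1)) ω - W (t i) ω) else 0) := by
        rw [← Fin.sum_univ_eq_sum_range
          (fun i => if j ≤ i then (W (t (i+1)) ω - W (t i) ω) else 0) M]
        apply Finset.sum_congr rfl
        intro i _
        by_cases h : j ≤ (i:ℕ) <;> simp [h, hYeq i ω]
      have h4 : ∑ i ∈ Finset.range M,
            (if j ≤ i then (W (t (i+1)) ω - W (t i) ω) else 0)
          = ∑ i ∈ Finset.Ico j M, (W (t (i+1)) ω - W (t i) ω) := by
        rw [← Finset.sum_filter]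
        apply Finset.sum_congr ?_ (fun _ _ => rfl)
        ext k
        simp only [Finset.mem_filter, Finset.mem_range, Finset.mem_Ico]
        omega
      have h5 : ∑ i ∈ Finset.Ico j M, (W (t (i+1)) ω - W (t i) ω)
          = W (t M) ω - W (t j) ω := by
        rw [Finset.sum_Ico_eq_sub _ hj, ← hSsum M ω, ← hSsum j ω]
        simp only [hSdef]
        ring
      rw [h1, h2, h3, h4, h5]
    set Bset : Set ((i : Sl) → ℝ) :=
      {y | a < |F j y|} ∩ ⋂ l ∈ Finset.range j, {y | a < |F l y|}ᶜ with hBset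
    have hBmeas : MeasurableSet Bset := by
      refine (measurableSet_lt measurable_const (hFmeas j).abs).inter ?_
      exact MeasurableSet.biInter (Finset.range j).countable_toSet
        (fun l _ => (measurableSet_lt measurable_const (hFmeas l).abs).compl)
    set Cset : Set ((i : Tl) → ℝ) := {y | |∑ i : Tl, y i| ≤ a/2} with hCset
    have hCsetmeas : MeasurableSet Cset :=
      measurableSet_le
        (Measurable.abs (Finset.measurable_sum _ fun i _ => measurable_pi_apply i))
        measurable_const
    have hTpre : T j = (fun ω (i : Sl) => Y i ω) ⁻¹' Bset := by
      ext ω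
      simp only [hTdef, hGdef, Set.mem_inter_iff, Set.mem_setOf_eq, Set.mem_iInter,
        Set.mem_compl_iff, Set.mem_preimage, hBset, Finset.mem_range]
      constructor
      · rintro ⟨h1', h2'⟩
        refine ⟨by rw [hFS j le_rfl ω]; exact h1', ?_⟩
        intro l hl
        rw [hFS l hl.le ω]
        exact h2' l hl
      · rintro ⟨h1', h2'⟩
        refine ⟨by rw [← hFS j le_rfl ω]; exact h1', ?_⟩
        intro l hl
        have := h2' l hl
        rw [hFS l hl.le ω] at this
        exact this
    have hCpre : C j = (fun ω (i : Tl) => Y i ω) ⁻¹' Cset := by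
      ext ω
      simp only [hCdef, Set.mem_setOf_eq, Set.mem_preimage, hCset]
      rw [hCsum ω]
    rw [hTpre, hCpre]
    exact (indepFun_iff_measure_inter_preimage_eq_mul.mp hIF) Bset Cset hBmeas hCsetmeas
  have hTdisj : ∀ i j : ℕ, i < j → Disjoint (T i) (T j) := by
    intro i j hij
    rw [Set.disjoint_left]
    intro ω hωi hωj
    have h1 : ω ∈ G i := hTsubG i hωi
    have h2 : ω ∉ G i := by
      have h3 := hωj.2
      simp only [Set.mem_iInter, Finset.mem_range, Set.mem_compl_iff] at h3
      exact h3 i hij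
    exact h2 h1
  have hsubSM : ∀ j ≤ M, T j ∩ C j ⊆ {ω | a/2 < |S M ω|} := by
    intro j hj ω hω
    obtain ⟨hT, hC⟩ := hω
    have h1 : a < |S j ω| := hTsubG j hT
    have h2 : |W (t M) ω - W (t j) ω| ≤ a/2 := hC
    have h3 : |S j ω - S M ω| = |W (t M) ω - W (t j) ω| := by
      rw [abs_sub_comm]
      congr 1
      simp only [hSdef]
      ring
    have h4 : |S j ω| - |S M ω| ≤ |S j ω - S M ω| := abs_sub_abs_le_abs_sub _ _
    rw [h3] at h4
    simp only [Set.mem_setOf_eq]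
    linarith
  have hpd : Set.PairwiseDisjoint ↑(Finset.range (M+1)) (fun j => T j ∩ C j) := by
    intro i _ j _ hne
    rcases hne.lt_or_gt with h | h
    · exact ((hTdisj i j h).mono Set.inter_subset_left Set.inter_subset_left)
    · exact ((hTdisj j i h).symm.mono Set.inter_subset_left Set.inter_subset_left)
  rw [htarget, hGT]
  calc μ (⋃ j ∈ Finset.range (M+1), T j)
      ≤ ∑ j ∈ Finset.range (M+1), μ (T j) := measure_biUnion_finset_le _ _
    _ ≤ ∑ j ∈ Finset.range (M+1), 2 * μ (T j ∩ C j) := by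
        apply Finset.sum_le_sum
        intro j hjmem
        have hj : j ≤ M := Nat.lt_succ_iff.mp (Finset.mem_range.mp hjmem)
        calc μ (T j) = 2 * (2⁻¹ * μ (T j)) := by
              rw [← mul_assoc, ENNReal.mul_inv_cancel two_ne_zero (by norm_num), one_mul]
          _ ≤ 2 * (μ (C j) * μ (T j)) := by
              apply mul_le_mul_right
              exact mul_le_mul_left (hChalf j hj) _
          _ = 2 * μ (T j ∩ C j) := by rw [hkey j hj, mul_comm (μ (T j))]
    _ = 2 * ∑ j ∈ Finset.range (M+1), μ (T j ∩ C j) := (Finset.mul_sum _ _ _).symm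
    _ = 2 * μ (⋃ j ∈ Finset.range (M+1), (T j ∩ C j)) := by
        rw [measure_biUnion_finset hpd (fun j _ => (hTmeas j).inter (hCmeas j))]
    _ ≤ 2 * μ {ω | a/2 < |S M ω|} := by
        apply mul_le_mul_right
        apply measure_mono
        apply Set.iUnion₂_subset
        intro j hjmem
        exact hsubSM j (Nat.lt_succ_iff.mp (Finset.mem_range.mp hjmem))
    _ ≤ 2 * ENNReal.ofReal K := by
        apply mul_le_mul_right
        have hmap : μ.map (S M) = gaussianReal 0 (Real.toNNReal (t M - u)) :=
          hW.gauss u (t M) hu (by rw [← ht0]; exact htmono (Nat.zero_le M))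
        have hv : ((Real.toNNReal (t M - u) : ℝ≥0) : ℝ) ≤ 1 := by
          rw [Real.coe_toNNReal']
          have heq : t M - u = 1 := by
            simp only [htdef]
            field_simp
            ring
          rw [heq]; norm_num
        exact gaussian_tail μ (S M) (hSmeas M) _ hv hmap (a/2) (half_pos ha)
    _ = ENNReal.ofReal (2 * K) := by
        rw [ENNReal.ofReal_mul (by norm_num : (0:ℝ) ≤ 2)]
        norm_num

lemma interval_bound {Ω : Type*} [MeasurableSpace Ω] (μ : Measure Ω)
    [IsProbabilityMeasure μ] (W : ℝ → Ω → ℝ) (hW : IsStandardBM μ W)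
    (u : ℝ) (hu : 0 ≤ u) (a : ℝ) (ha : 0 < a)
    (ha2 : Real.sqrt 2 * Real.exp (-(a/2)^2/4) ≤ 1/2) :
    μ {ω | ∃ s ∈ Set.Icc u (u+1), a < |W s ω - W u ω|} ≤
      ENNReal.ofReal (2 * (Real.sqrt 2 * Real.exp (-(a/2)^2/4))) := by
  set A : ℕ → Set Ω := fun p =>
    {ω | ∃ j : ℕ, j ≤ 2^p ∧ a < |W (u + (j:ℝ)/((2^p : ℕ):ℝ)) ω - W u ω|} with hA
  have hAmono : Monotone A := by
    apply monotone_nat_of_le_succ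
    intro p ω hω
    obtain ⟨j, hj, hlt⟩ := hω
    refine ⟨2*j, by omega, ?_⟩
    have hcast : ((2*j : ℕ):ℝ)/((2^(p+1) : ℕ):ℝ) = (j:ℝ)/((2^p : ℕ):ℝ) := by
      push_cast
      rw [pow_succ]
      have h2p : (0:ℝ) < 2^p := by positivity
      field_simp
    rw [hcast]
    exact hlt
  have hsub : {ω | ∃ s ∈ Set.Icc u (u+1), a < |W s ω - W u ω|} ⊆
      {ω | ¬ Continuous fun x => W x ω} ∪ ⋃ p, A p := by
    intro ω hω
    by_cases hc : Continuous fun x => W x ω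
    · right
      obtain ⟨s, hs, hlt⟩ := hω
      have hsu : 0 ≤ s - u := by linarith [hs.1]
      have hsu1 : s - u ≤ 1 := by linarith [hs.2]
      set x : ℕ → ℝ := fun p => u + ((⌊(s-u) * 2^p⌋₊ : ℝ)/((2^p : ℕ):ℝ)) with hx
      have hxle : ∀ p, x p ≤ s := by
        intro p
        have h1 : (⌊(s-u) * 2^p⌋₊ : ℝ) ≤ (s-u) * 2^p :=
          Nat.floor_le (by positivity)
        have h2p : (0:ℝ) < 2^p := by positivity
        have : (⌊(s-u) * 2^p⌋₊ : ℝ)/((2^p : ℕ):ℝ) ≤ s - u := by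
          rw [div_le_iff₀ (by push_cast; positivity)]
          push_cast
          exact h1
        simp only [hx]
        linarith
      have hxge : ∀ p, s - (1/2)^p ≤ x p := by
        intro p
        have h1 : (s-u) * 2^p < (⌊(s-u) * 2^p⌋₊ : ℝ) + 1 := Nat.lt_floor_add_one _
        have h2p : (0:ℝ) < 2^p := by positivity
        have : s - u - (1/2)^p ≤ (⌊(s-u) * 2^p⌋₊ : ℝ)/((2^p : ℕ):ℝ) := by
          rw [le_div_iff₀ (by push_cast; positivity)]
          push_cast
          have hpow : (1/2 : ℝ)^p * 2^p = 1 := by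
            rw [← mul_pow]
            norm_num
          nlinarith
        simp only [hx]
        linarith
      have hxt : Tendsto x atTop (nhds s) := by
        apply tendsto_of_tendsto_of_tendsto_of_le_of_le (g := fun p => s - (1/2:ℝ)^p)
          (h := fun _ => s) ?_ tendsto_const_nhds hxge hxle
        have : Tendsto (fun p : ℕ => (1/2:ℝ)^p) atTop (nhds 0) :=
          tendsto_pow_atTop_nhds_zero_of_lt_one (by norm_num) (by norm_num)
        have h2 := this.const_sub s
        simpa using h2
      have hWt : Tendsto (fun p => |W (x p) ω - W u ω|) atTop (nhds (|W s ω - W u ω|)) := by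
        have h1 : Tendsto (fun p => W (x p) ω) atTop (nhds (W s ω)) :=
          (hc.tendsto s).comp hxt
        exact (continuous_abs.tendsto _).comp (h1.sub_const _)
      obtain ⟨p, hp⟩ := (hWt.eventually (lt_mem_nhds hlt)).exists
      refine Set.mem_iUnion.2 ⟨p, ⟨⌊(s-u) * 2^p⌋₊, ?_, hp⟩⟩
      · have h1 : (s-u) * 2^p ≤ ((2^p : ℕ) : ℝ) := by
          push_cast
          nlinarith [pow_pos (show (0:ℝ) < 2 by norm_num) p]
        calc ⌊(s-u) * 2^p⌋₊ ≤ ⌊((2^p : ℕ) : ℝ)⌋₊ := Nat.floor_le_floor h1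
          _ = 2^p := Nat.floor_natCast _
    · left
      exact hc
  calc μ {ω | ∃ s ∈ Set.Icc u (u+1), a < |W s ω - W u ω|}
      ≤ μ ({ω | ¬ Continuous fun x => W x ω} ∪ ⋃ p, A p) := measure_mono hsub
    _ ≤ μ {ω | ¬ Continuous fun x => W x ω} + μ (⋃ p, A p) := measure_union_le _ _
    _ = μ (⋃ p, A p) := by
        rw [ae_iff.mp hW.cont]
        rw [zero_add]
    _ = ⨆ p, μ (A p) := (hAmono.directed_le).measure_iUnion
    _ ≤ ENNReal.ofReal (2 * (Real.sqrt 2 * Real.exp (-(a/2)^2/4))) := by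
        apply iSup_le
        intro p
        exact finite_max_bound μ W hW u hu (2^p) (Nat.two_pow_pos p) a ha ha2

lemma q_sq_div_large (q : ℝ → ℝ) (hq : MemQ q) (c : ℝ) (hc : 0 < c) (hI : IFin q c) :
    ∀ X : ℝ, ∃ δ : ℝ, 0 < δ ∧ δ ≤ 1 ∧ MonotoneOn q (Set.Ioc 0 δ) ∧
      ∀ t ∈ Set.Ioc (0:ℝ) δ, X ≤ (q t)^2 / t := by
  intro X
  obtain ⟨δ₀, hδ₀pos, hmono⟩ := hq.2.2
  set δ₁ : ℝ := min δ₀ 1 with hδ₁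
  have hδ₁pos : 0 < δ₁ := lt_min hδ₀pos one_pos
  have hmono₁ : MonotoneOn q (Set.Ioc 0 δ₁) :=
    hmono.mono (Set.Ioc_subset_Ioc le_rfl (min_le_left _ _))
  set f : ℝ → ℝ := fun t => t⁻¹ * Real.exp (-c * (q t)^2 / t) with hf
  set ν : Measure ℝ :=
    (volume.restrict (Set.Ioc (0:ℝ) 1)).withDensity (fun t => ENNReal.ofReal (f t)) with hν
  have hνapp : ∀ s : Set ℝ, MeasurableSet s → s ⊆ Set.Ioc (0:ℝ) 1 →
      ν s = ∫⁻ t in s, ENNReal.ofReal (f t) := by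
    intro s hs hsub
    rw [hν, withDensity_apply _ hs, Measure.restrict_restrict hs,
      Set.inter_eq_self_of_subset_left hsub]
  have hνfin : ν (Set.Ioc (0:ℝ) 1) ≠ ∞ := by
    rw [hνapp _ measurableSet_Ioc subset_rfl]
    have hb : ∫⁻ t in Set.Ioc (0:ℝ) 1, ENNReal.ofReal (f t) ≤
        ∫⁻ t in Set.Ioc (0:ℝ) 1, ‖f t‖₊ := by
      apply lintegral_mono
      intro t
      exact Real.ofReal_le_enorm (f t)
    exact (lt_of_le_of_lt hb hI.2).ne
  -- ν (Ioc 0 (1/(i+1))) → 0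
  have hanti : Antitone (fun i : ℕ => Set.Ioc (0:ℝ) (1/(i+1))) := by
    intro i j hij
    apply Set.Ioc_subset_Ioc le_rfl
    apply one_div_le_one_div_of_le (by positivity)
    have hij' : (i:ℝ) ≤ (j:ℝ) := by exact_mod_cast hij
    linarith
  have hiInter : (⋂ i : ℕ, Set.Ioc (0:ℝ) (1/(i+1))) = ∅ := by
    ext x
    simp only [Set.mem_iInter, Set.mem_Ioc, Set.mem_empty_iff_false, iff_false, not_forall]
    by_cases hx : 0 < x
    · obtain ⟨n, hn⟩ := exists_nat_one_div_lt hx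
      exact ⟨n, fun h => absurd h.2 (not_le.2 (by exact_mod_cast hn))⟩
    · exact ⟨0, fun h => hx h.1⟩
  have htend : Tendsto (fun i : ℕ => ν (Set.Ioc (0:ℝ) (1/(i+1)))) atTop (nhds 0) := by
    have h := tendsto_measure_iInter_atTop (μ := ν) (fun i => (measurableSet_Ioc).nullMeasurableSet)
      hanti ⟨0, by
        refine (measure_mono ?_ |>.trans_lt hνfin.lt_top).ne
        apply Set.Ioc_subset_Ioc le_rfl; norm_num⟩
    rw [hiInter] at h
    simpa [Function.comp_def] using h
  have hpos : (0:ℝ≥0∞) < ENNReal.ofReal ((1/2) * Real.exp (-(2*c) * X)) := by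
    apply ENNReal.ofReal_pos.2
    positivity
  obtain ⟨i, hi⟩ := (htend.eventually (gt_mem_nhds hpos)).exists
  set δ : ℝ := min δ₁ (1/(i+1)) with hδ
  have hδpos : 0 < δ := lt_min hδ₁pos (by positivity)
  refine ⟨δ, hδpos, le_trans (min_le_left _ _) (min_le_right _ _), 
    hmono₁.mono (Set.Ioc_subset_Ioc le_rfl (min_le_left _ _)), ?_⟩
  intro u hu
  obtain ⟨hu0, huδ⟩ := hu
  have huδ₁ : u ≤ δ₁ := le_trans huδ (min_le_left _ _)
  have hu1 : u ≤ 1 := le_trans huδ₁ (min_le_right _ _)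
  have hqu : 0 < q u := hq.1 u ⟨hu0, hu1⟩
  -- lower bound the measure of Ioc (u/2) u
  have hlow : ENNReal.ofReal ((1/2) * Real.exp (-(2*c) * ((q u)^2/u))) ≤
      ν (Set.Ioc (u/2) u) := by
    have hsub' : Set.Ioc (u/2) u ⊆ Set.Ioc (0:ℝ) 1 :=
      Set.Ioc_subset_Ioc (by positivity) hu1
    rw [hνapp _ measurableSet_Ioc hsub']
    have hptw : ∀ t ∈ Set.Ioc (u/2) u,
        ENNReal.ofReal (u⁻¹ * Real.exp (-(2*c) * ((q u)^2/u))) ≤ ENNReal.ofReal (f t) := by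
      intro t ht
      obtain ⟨ht1, ht2⟩ := ht
      have ht0 : 0 < t := lt_trans (by positivity) ht1
      apply ENNReal.ofReal_le_ofReal
      have hqt : 0 < q t := hq.1 t ⟨ht0, le_trans ht2 hu1⟩
      have hqle : q t ≤ q u := hmono₁ ⟨ht0, le_trans ht2 huδ₁⟩ ⟨hu0, huδ₁⟩ ht2
      have hexp : -(2*c) * ((q u)^2/u) ≤ -c * (q t)^2 / t := by
        have h1 : (q t)^2/t ≤ (q u)^2/(u/2) := by
          apply div_le_div₀ (by positivity) (by nlinarith) (by positivity) ht1.le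
        have h2 : (q u)^2/(u/2) = 2 * ((q u)^2/u) := by
          field_simp
        rw [h2] at h1
        have h3 : c * ((q t)^2/t) ≤ 2*c * ((q u)^2/u) := by
          calc c * ((q t)^2/t) ≤ c * (2 * ((q u)^2/u)) :=
                mul_le_mul_of_nonneg_left h1 hc.le
            _ = 2*c * ((q u)^2/u) := by ring
        have h4 : -c * (q t)^2 / t = -(c * ((q t)^2/t)) := by ring
        rw [h4]
        linarith
      have hinv : u⁻¹ ≤ t⁻¹ := by
        apply inv_anti₀ ht0 ht2
      exact mul_le_mul hinv (Real.exp_le_exp.2 hexp) (Real.exp_nonneg _)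
        (inv_nonneg.2 ht0.le)
    have hvol : volume (Set.Ioc (u/2) u) = ENNReal.ofReal (u/2) := by
      rw [Real.volume_Ioc]; congr 1; ring
    calc ENNReal.ofReal ((1/2) * Real.exp (-(2*c) * ((q u)^2/u)))
        = ENNReal.ofReal (u⁻¹ * Real.exp (-(2*c) * ((q u)^2/u))) * ENNReal.ofReal (u/2) := by
          rw [← ENNReal.ofReal_mul (by positivity)]
          congr 1
          field_simp
      _ = ∫⁻ _ in Set.Ioc (u/2) u,
            ENNReal.ofReal (u⁻¹ * Real.exp (-(2*c) * ((q u)^2/u))) := by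
          rw [setLIntegral_const, hvol]
      _ ≤ ∫⁻ t in Set.Ioc (u/2) u, ENNReal.ofReal (f t) :=
          setLIntegral_mono' measurableSet_Ioc hptw
  have hchain : ENNReal.ofReal ((1/2) * Real.exp (-(2*c) * ((q u)^2/u))) <
      ENNReal.ofReal ((1/2) * Real.exp (-(2*c) * X)) := by
    calc ENNReal.ofReal ((1/2) * Real.exp (-(2*c) * ((q u)^2/u)))
        ≤ ν (Set.Ioc (u/2) u) := hlow
      _ ≤ ν (Set.Ioc (0:ℝ) (1/(i+1))) := measure_mono
          (Set.Ioc_subset_Ioc (by positivity) (le_trans huδ (min_le_right _ _)))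
      _ < _ := hi
  have hreal : (1/2) * Real.exp (-(2*c) * ((q u)^2/u)) < (1/2) * Real.exp (-(2*c) * X) :=
    (ENNReal.ofReal_lt_ofReal_iff (by positivity)).1 hchain
  have hexplt : Real.exp (-(2*c) * ((q u)^2/u)) < Real.exp (-(2*c) * X) := by linarith
  have hfin := Real.exp_lt_exp.1 hexplt
  nlinarith [hc]

lemma Khalf {a : ℝ} (ha : 6 ≤ a) : Real.sqrt 2 * Real.exp (-(a/2)^2/4) ≤ 1/2 := by
  have h1 : Real.exp (-(a/2)^2/4) ≤ Real.exp (-2) := by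
    apply Real.exp_le_exp.2
    nlinarith
  have h2 : Real.exp (-2) ≤ 1/3 := by
    rw [Real.exp_neg]
    have h3 : (3:ℝ) ≤ Real.exp 2 := by
      have := Real.add_one_le_exp (2:ℝ)
      linarith
    have := inv_anti₀ (by norm_num : (0:ℝ) < 3) h3
    linarith
  have h3 : Real.sqrt 2 ≤ 3/2 := by
    nlinarith [Real.sq_sqrt (show (0:ℝ) ≤ 2 by norm_num), Real.sqrt_nonneg 2]
  nlinarith [Real.exp_nonneg (-(a/2)^2/4), Real.sqrt_nonneg 2]

lemma geom_Icc_le {r : ℝ} (h0 : 0 ≤ r) (h2 : r ≤ 1/2) (n : ℕ) :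
    ∑ k ∈ Finset.Icc 1 n, r^k ≤ 2*r := by
  have hsum : ∑ k ∈ Finset.range n, r^k ≤ 2 := by
    have hr1 : r ≠ 1 := by linarith
    rw [geom_sum_eq hr1]
    have hp1 : 0 ≤ r^n := pow_nonneg h0 n
    have hp2 : r^n ≤ 1 := pow_le_one₀ h0 (by linarith)
    have hneg : r - 1 < 0 := by linarith
    rw [div_le_iff_of_neg hneg]
    linarith
  calc ∑ k ∈ Finset.Icc 1 n, r^k = ∑ i ∈ Finset.range n, r^(1+i) := by
        rw [← Finset.Ico_add_one_right_eq_Icc, Finset.sum_Ico_eq_sum_range]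
        simp
    _ = r * ∑ i ∈ Finset.range n, r^i := by
        rw [Finset.mul_sum]
        apply Finset.sum_congr rfl
        intro i _
        rw [pow_add, pow_one]
    _ ≤ r * 2 := mul_le_mul_of_nonneg_left hsum h0
    _ = 2*r := mul_comm _ _

end AuxStmt18

set_option maxHeartbeats 2000000 in
/-- If `q ∈ Q` with `I(q,c) < ∞` for some `c > 0`, then
`n^{-1/2} sup_{1/n ≤ t ≤ 1} |W(⌊nt⌋) − W(nt)|/q(t) → 0` in probability. -/
theorem stmt18 {Ω : Type*} [MeasurableSpace Ω] (μ : Measure Ω)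
    [IsProbabilityMeasure μ] (W : ℝ → Ω → ℝ) (hW : IsStandardBM μ W)
    (q : ℝ → ℝ) (hq : MemQ q) (hI : ∃ c > (0:ℝ), IFin q c) :
    ∀ ε > (0:ℝ),
      Tendsto (fun n : ℕ =>
          μ {ω | ∃ t ∈ Set.Icc ((n:ℝ)⁻¹) 1,
            ε < ((n:ℝ)) ^ (-(1/2 : ℝ)) *
              (|W (↑(⌊(n:ℝ) * t⌋₊)) ω - W ((n:ℝ) * t) ω| / q t)})
        atTop (nhds 0) := by
  classical
  intro ε hε
  obtain ⟨c, hc, hIc⟩ := hI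
  rw [ENNReal.tendsto_atTop_zero]
  intro η hη
  obtain ⟨ρ, hρpos, hρle⟩ : ∃ ρ : ℝ, 0 < ρ ∧ ENNReal.ofReal ρ ≤ η := by
    rcases eq_or_ne η ⊤ with h | h
    · exact ⟨1, one_pos, by simp [h]⟩
    · exact ⟨η.toReal, ENNReal.toReal_pos hη.ne' h, (ENNReal.ofReal_toReal h).le⟩
  set θ₀ : ℝ := max (Real.log 2) (Real.log (16/ρ)) with hθ₀
  have hθ₀pos : 0 < θ₀ := lt_of_lt_of_le (Real.log_pos (by norm_num)) (le_max_left _ _)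
  set X : ℝ := (16 * θ₀ + 36)/ε^2 with hX
  have hXpos : 0 < X := by positivity
  obtain ⟨δ, hδpos, hδ1, hmonoδ, hqlow⟩ := q_sq_div_large q hq c hc hIc X
  set m : ℝ := sInf (q '' Set.Icc (δ/2) 1) with hm
  have hmpos : 0 < m := hq.2.1 (δ/2) ⟨by positivity, by linarith⟩
  set γ : ℝ := ε^2 * m^2 / 16 with hγ
  have hγpos : 0 < γ := by positivity
  set θ : ℝ := ε^2 * X / 16 with hθ
  have hθval : θ = θ₀ + 36/16 := by
    rw [hθ, hX]
    field_simp
  have hθθ₀ : θ₀ ≤ θ := by rw [hθval]; linarith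
  set r : ℝ := Real.exp (-θ) with hr
  have hrpos : 0 < r := Real.exp_pos _
  have hrhalf : r ≤ 1/2 := by
    have h1 : r ≤ Real.exp (-(Real.log 2)) := Real.exp_le_exp.2 (by
      rw [neg_le_neg_iff]
      calc Real.log 2 ≤ θ₀ := le_max_left _ _
        _ ≤ θ := hθθ₀)
    rw [Real.exp_neg, Real.exp_log (by norm_num : (0:ℝ) < 2)] at h1
    linarith
  have hrρ : r ≤ ρ/16 := by
    have h1 : r ≤ Real.exp (-(Real.log (16/ρ))) := Real.exp_le_exp.2 (by
      rw [neg_le_neg_iff]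
      calc Real.log (16/ρ) ≤ θ₀ := le_max_right _ _
        _ ≤ θ := hθθ₀)
    rw [Real.exp_neg, Real.exp_log (by positivity)] at h1
    calc r ≤ (16/ρ)⁻¹ := h1
      _ = ρ/16 := by field_simp
  have hsqrt2 : Real.sqrt 2 ≤ 3/2 := by
    nlinarith [Real.sq_sqrt (show (0:ℝ) ≤ 2 by norm_num), Real.sqrt_nonneg 2]
  -- exponential decay for the large-t region
  have hdecay : Tendsto (fun n : ℕ => 2*Real.sqrt 2*(((n:ℝ)+1) * Real.exp (-(γ * n))))
      atTop (nhds 0) := by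
    have h0 : Tendsto (fun x : ℝ => x * Real.exp (-x)) atTop (nhds 0) := by
      have := Real.tendsto_pow_mul_exp_neg_atTop_nhds_zero 1
      simpa using this
    have hγn : Tendsto (fun n : ℕ => γ * (n:ℝ)) atTop atTop :=
      (tendsto_natCast_atTop_atTop).const_mul_atTop hγpos
    have h1 : Tendsto (fun n : ℕ => (γ * n) * Real.exp (-(γ * n))) atTop (nhds 0) :=
      h0.comp hγn
    have h2 : Tendsto (fun n : ℕ => Real.exp (-(γ * n))) atTop (nhds 0) :=
      Real.tendsto_exp_neg_atTop_nhds_zero.comp hγn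
    have h3 : Tendsto (fun n : ℕ => γ⁻¹ * ((γ * n) * Real.exp (-(γ * n)))
        + Real.exp (-(γ * n))) atTop (nhds 0) := by
      have := (h1.const_mul γ⁻¹).add h2
      simpa using this
    have h4 : (fun n : ℕ => ((n:ℝ)+1) * Real.exp (-(γ * n))) =
        fun n : ℕ => γ⁻¹ * ((γ * n) * Real.exp (-(γ * n))) + Real.exp (-(γ * n)) := by
      funext n
      field_simp
    have h5 : Tendsto (fun n : ℕ => ((n:ℝ)+1) * Real.exp (-(γ * n))) atTop (nhds 0) := by
      rw [h4]; exact h3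
    have := h5.const_mul (2*Real.sqrt 2)
    simpa using this
  obtain ⟨N₁, hN₁⟩ := Filter.eventually_atTop.1
    (hdecay.eventually (gt_mem_nhds (show (0:ℝ) < ρ/2 by positivity)))
  obtain ⟨N₂, hN₂⟩ := exists_nat_ge (max (2/δ) (36/(ε^2 * m^2)))
  refine ⟨max (max N₁ N₂) 1, fun n hn => ?_⟩
  -- basic consequences of n being large
  have hn1 : 1 ≤ n := le_trans (le_max_right _ _) hn
  have hnN₁ : N₁ ≤ n := le_trans (le_trans (le_max_left _ _) (le_max_left _ _)) hn
  have hnN₂ : N₂ ≤ n := le_trans (le_trans (le_max_right _ _) (le_max_left _ _)) hn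
  have hnpos : (0:ℝ) < n := by exact_mod_cast hn1
  have hnr : max (2/δ) (36/(ε^2 * m^2)) ≤ (n:ℝ) :=
    le_trans hN₂ (by exact_mod_cast hnN₂)
  have hn2δ : 2/δ ≤ (n:ℝ) := le_trans (le_max_left _ _) hnr
  have hn36 : 36/(ε^2 * m^2) ≤ (n:ℝ) := le_trans (le_max_right _ _) hnr
  have h36 : 36 ≤ ε^2 * n * m^2 := by
    rw [div_le_iff₀ (by positivity)] at hn36
    nlinarith
  have hinvδ : ((n:ℝ))⁻¹ ≤ δ/2 := by
    have h2 : 2 ≤ (n:ℝ)*δ := by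
      rw [div_le_iff₀ hδpos] at hn2δ
      linarith
    rw [show ((n:ℝ))⁻¹ = 1/(n:ℝ) from (one_div _).symm,
      div_le_div_iff₀ hnpos (by norm_num : (0:ℝ) < 2)]
    nlinarith
  set ck : ℕ → ℝ := fun k => if ((k:ℝ)+1) ≤ δ * n then q ((k:ℝ)/n) else m with hckdef
  set ak : ℕ → ℝ := fun k => ε * Real.sqrt n * ck k with hakdef
  have hsqn : Real.sqrt n ^ 2 = n := Real.sq_sqrt (Nat.cast_nonneg n)
  have hsqnpos : 0 < Real.sqrt n := Real.sqrt_pos.2 hnpos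
  have hkeyfacts : ∀ k ∈ Finset.Icc 1 n, 0 < ck k ∧ 6 ≤ ak k ∧
      Real.exp (-(ak k)^2/16) ≤ (if ((k:ℝ)+1) ≤ δ * n then r^k else Real.exp (-(γ*n))) := by
    intro k hk
    obtain ⟨hk1, hkn⟩ := Finset.mem_Icc.1 hk
    have hk1r : (1:ℝ) ≤ k := by exact_mod_cast hk1
    have hknr : (k:ℝ) ≤ n := by exact_mod_cast hkn
    by_cases hcase : ((k:ℝ)+1) ≤ δ * n
    · have htmem : (k:ℝ)/n ∈ Set.Ioc (0:ℝ) δ := by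
        constructor
        · positivity
        · rw [div_le_iff₀ hnpos]; linarith
      have hqpos : 0 < q ((k:ℝ)/n) :=
        hq.1 _ ⟨htmem.1, by rw [div_le_one hnpos]; exact hknr⟩
      have hq2 : X * ((k:ℝ)/n) ≤ (q ((k:ℝ)/n))^2 := by
        have h := hqlow _ htmem
        rw [le_div_iff₀ (by positivity : (0:ℝ) < (k:ℝ)/n)] at h
        exact h
      have hck : ck k = q ((k:ℝ)/n) := if_pos hcase
      have h1 : (ak k)^2 = ε^2 * n * (ck k)^2 := by
        simp only [hakdef]
        rw [mul_pow, mul_pow, hsqn]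
      have hak2 : 16 * θ * k ≤ (ak k)^2 := by
        rw [h1, hck]
        have h2 : ε^2 * (n:ℝ) * (X * ((k:ℝ)/n)) = ε^2 * X * k := by field_simp
        have h3 : ε^2 * (n:ℝ) * (X * ((k:ℝ)/n)) ≤ ε^2 * n * (q ((k:ℝ)/n))^2 :=
          mul_le_mul_of_nonneg_left hq2 (by positivity)
        rw [h2] at h3
        calc 16 * θ * k = ε^2 * X * k := by rw [hθ]; ring
          _ ≤ _ := h3
      have haknn : 0 ≤ ak k := by
        simp only [hakdef, hck]
        positivity
      have hsix : 6 ≤ ak k := by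
        have h36' : 36 ≤ (ak k)^2 := by
          have h0 : 36 ≤ 16 * θ := by rw [hθval]; linarith
          have h1 : 16 * θ * 1 ≤ 16 * θ * k :=
            mul_le_mul_of_nonneg_left hk1r (by linarith)
          linarith
        nlinarith
      refine ⟨by rw [hck]; exact hqpos, hsix, ?_⟩
      rw [if_pos hcase, hr, ← Real.exp_nat_mul]
      apply Real.exp_le_exp.2
      have : (k:ℝ) * (-θ) = -(θ * k) := by ring
      rw [this]
      have : -(ak k)^2/16 = -((ak k)^2/16) := by ring
      rw [this]
      apply neg_le_neg
      linarith
    · have hck : ck k = m := if_neg hcase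
      have h1 : (ak k)^2 = ε^2 * n * m^2 := by
        simp only [hakdef, hck]
        rw [mul_pow, mul_pow, hsqn]
      have haknn : 0 ≤ ak k := by
        simp only [hakdef, hck]
        positivity
      have hsix : 6 ≤ ak k := by
        have h36' : 36 ≤ (ak k)^2 := by rw [h1]; exact h36
        nlinarith
      refine ⟨by rw [hck]; exact hmpos, hsix, ?_⟩
      rw [if_neg hcase]
      apply le_of_eq
      congr 1
      rw [h1, hγ]
      ring
  set Bad : ℕ → Set Ω := fun k =>
    {ω | ∃ s ∈ Set.Icc (k:ℝ) ((k:ℝ)+1), ak k < |W s ω - W (k:ℝ) ω|} with hBaddef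
  have hBadLe : ∀ k ∈ Finset.Icc 1 n, μ (Bad k) ≤
      ENNReal.ofReal (2*Real.sqrt 2*Real.exp (-(ak k)^2/16)) := by
    intro k hk
    obtain ⟨hcpos, hsix, _⟩ := hkeyfacts k hk
    have hapos : 0 < ak k := lt_of_lt_of_le (by norm_num) hsix
    have hb := interval_bound μ W hW (k:ℝ) (Nat.cast_nonneg k) (ak k) hapos (Khalf hsix)
    refine le_trans hb (le_of_eq ?_)
    congr 1
    have hexp : -((ak k)/2)^2/4 = -(ak k)^2/16 := by ring
    rw [hexp]
    ring
  have hsub : {ω | ∃ t ∈ Set.Icc ((n:ℝ)⁻¹) 1,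
      ε < ((n:ℝ)) ^ (-(1/2 : ℝ)) *
        (|W (↑(⌊(n:ℝ) * t⌋₊)) ω - W ((n:ℝ) * t) ω| / q t)}
      ⊆ ⋃ k ∈ Finset.Icc 1 n, Bad k := by
    intro ω hω
    obtain ⟨t, ht, hlt⟩ := hω
    have ht0 : 0 < t := lt_of_lt_of_le (by positivity) ht.1
    have hnt1 : 1 ≤ (n:ℝ)*t := by
      calc (1:ℝ) = (n:ℝ) * (n:ℝ)⁻¹ := (mul_inv_cancel₀ hnpos.ne').symm
        _ ≤ (n:ℝ) * t := mul_le_mul_of_nonneg_left ht.1 hnpos.le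
    set k := ⌊(n:ℝ)*t⌋₊ with hkdef
    have hk1 : 1 ≤ k := Nat.le_floor (by exact_mod_cast hnt1)
    have hkn : k ≤ n := by
      have h1 : (n:ℝ)*t ≤ (n:ℝ) := by nlinarith [ht.2]
      calc k ≤ ⌊(n:ℝ)⌋₊ := Nat.floor_le_floor h1
        _ = n := Nat.floor_natCast n
    have hkt : (k:ℝ) ≤ (n:ℝ)*t := Nat.floor_le (by positivity)
    have htk1 : (n:ℝ)*t ≤ (k:ℝ)+1 := (Nat.lt_floor_add_one _).le
    have hqt : 0 < q t := hq.1 t ⟨ht0, ht.2⟩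
    have hD : ε * Real.sqrt n * q t < |W ((n:ℝ)*t) ω - W (k:ℝ) ω| := by
      have hrpow : ((n:ℝ)) ^ (-(1/2 : ℝ)) = (Real.sqrt n)⁻¹ := by
        rw [Real.rpow_neg (Nat.cast_nonneg n), ← Real.sqrt_eq_rpow]
      rw [hrpow, inv_mul_eq_div, lt_div_iff₀ hsqnpos, lt_div_iff₀ hqt] at hlt
      rw [abs_sub_comm] at hlt
      exact hlt
    have hckle : ck k ≤ q t := by
      by_cases hcase : ((k:ℝ)+1) ≤ δ * n
      · simp only [hckdef, if_pos hcase]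
        have hm1 : (k:ℝ)/n ∈ Set.Ioc (0:ℝ) δ := by
          constructor
          · positivity
          · rw [div_le_iff₀ hnpos]; linarith
        have hm2 : t ∈ Set.Ioc (0:ℝ) δ := by
          constructor
          · exact ht0
          · -- n t ≤ k+1 ≤ δ n
            have : (n:ℝ) * t ≤ δ * n := le_trans htk1 hcase
            nlinarith
        apply hmonoδ hm1 hm2
        rw [div_le_iff₀ hnpos]
        nlinarith
      · simp only [hckdef, if_neg hcase]
        apply csInf_le
        · refine ⟨0, ?_⟩
          rintro y ⟨x, hx, rfl⟩
          exact (hq.1 x ⟨by linarith [hx.1], hx.2⟩).le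
        · refine ⟨t, ⟨?_, ht.2⟩, rfl⟩
          have h1 : δ * n - 1 < (k:ℝ) := by
            have := not_le.1 hcase
            linarith
          have h2 : (k:ℝ)/n ≤ t := by rw [div_le_iff₀ hnpos]; nlinarith
          have h3 : δ - (n:ℝ)⁻¹ < (k:ℝ)/n := by
            rw [lt_div_iff₀ hnpos]
            have heq : (δ - (n:ℝ)⁻¹)*n = δ*n - 1 := by field_simp
            rw [heq]; exact h1
          linarith
    refine Set.mem_iUnion₂.2 ⟨k, Finset.mem_Icc.2 ⟨hk1, hkn⟩, ?_⟩
    refine ⟨(n:ℝ)*t, ⟨hkt, htk1⟩, lt_of_le_of_lt ?_ hD⟩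
    simp only [hakdef]
    exact mul_le_mul_of_nonneg_left hckle (by positivity)
  have hsum : ∑ k ∈ Finset.Icc 1 n, (2*Real.sqrt 2*Real.exp (-(ak k)^2/16)) ≤ ρ := by
    rw [← Finset.sum_filter_add_sum_filter_not (Finset.Icc 1 n)
      (fun k : ℕ => ((k:ℝ)+1) ≤ δ * n)]
    have hsmall : ∑ k ∈ (Finset.Icc 1 n).filter (fun k : ℕ => ((k:ℝ)+1) ≤ δ * n),
        (2*Real.sqrt 2*Real.exp (-(ak k)^2/16)) ≤ ρ/2 := by
      calc ∑ k ∈ (Finset.Icc 1 n).filter (fun k : ℕ => ((k:ℝ)+1) ≤ δ * n),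
            (2*Real.sqrt 2*Real.exp (-(ak k)^2/16))
          ≤ ∑ k ∈ (Finset.Icc 1 n).filter (fun k : ℕ => ((k:ℝ)+1) ≤ δ * n),
            2*Real.sqrt 2 * r^k := by
            apply Finset.sum_le_sum
            intro k hk'
            have hk := Finset.mem_filter.1 hk'
            have hfacts := (hkeyfacts k hk.1).2.2
            rw [if_pos hk.2] at hfacts
            exact mul_le_mul_of_nonneg_left hfacts (by positivity)
        _ ≤ ∑ k ∈ Finset.Icc 1 n, 2*Real.sqrt 2 * r^k := by
            apply Finset.sum_le_sum_of_subset_of_nonneg (Finset.filter_subset _ _)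
            intro k _ _
            positivity
        _ = 2*Real.sqrt 2 * ∑ k ∈ Finset.Icc 1 n, r^k := by rw [Finset.mul_sum]
        _ ≤ 2*Real.sqrt 2 * (2*r) :=
            mul_le_mul_of_nonneg_left (geom_Icc_le hrpos.le hrhalf n) (by positivity)
        _ ≤ ρ/2 := by nlinarith [hrpos, hsqrt2, hrρ, Real.sqrt_nonneg 2]
    have hlarge : ∑ k ∈ (Finset.Icc 1 n).filter (fun k : ℕ => ¬(((k:ℝ)+1) ≤ δ * n)),
        (2*Real.sqrt 2*Real.exp (-(ak k)^2/16)) ≤ ρ/2 := by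
      have hbound : ∀ k ∈ (Finset.Icc 1 n).filter (fun k : ℕ => ¬(((k:ℝ)+1) ≤ δ * n)),
          (2*Real.sqrt 2*Real.exp (-(ak k)^2/16)) ≤ 2*Real.sqrt 2*Real.exp (-(γ*n)) := by
        intro k hk'
        have hk := Finset.mem_filter.1 hk'
        have hfacts := (hkeyfacts k hk.1).2.2
        rw [if_neg hk.2] at hfacts
        exact mul_le_mul_of_nonneg_left hfacts (by positivity)
      have hcard : ((Finset.Icc 1 n).filter (fun k : ℕ => ¬(((k:ℝ)+1) ≤ δ * n))).card ≤ n := by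
        refine le_trans (Finset.card_filter_le _ _) ?_
        rw [Nat.card_Icc]
        omega
      calc ∑ k ∈ (Finset.Icc 1 n).filter (fun k : ℕ => ¬(((k:ℝ)+1) ≤ δ * n)),
            (2*Real.sqrt 2*Real.exp (-(ak k)^2/16))
          ≤ ((Finset.Icc 1 n).filter (fun k : ℕ => ¬(((k:ℝ)+1) ≤ δ * n))).card •
              (2*Real.sqrt 2*Real.exp (-(γ*n))) := Finset.sum_le_card_nsmul _ _ _ hbound
        _ = (((Finset.Icc 1 n).filter (fun k : ℕ => ¬(((k:ℝ)+1) ≤ δ * n))).card : ℝ) *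
              (2*Real.sqrt 2*Real.exp (-(γ*n))) := nsmul_eq_mul _ _
        _ ≤ (n:ℝ) * (2*Real.sqrt 2*Real.exp (-(γ*n))) := by
            apply mul_le_mul_of_nonneg_right ?_ (by positivity)
            exact_mod_cast hcard
        _ ≤ 2*Real.sqrt 2*(((n:ℝ)+1) * Real.exp (-(γ*n))) := by
            have hexpnn : 0 ≤ Real.exp (-(γ*n)) := Real.exp_nonneg _
            nlinarith [Real.sqrt_nonneg 2]
        _ ≤ ρ/2 := (hN₁ n hnN₁).le
    linarith
  calc μ {ω | ∃ t ∈ Set.Icc ((n:ℝ)⁻¹) 1,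
        ε < ((n:ℝ)) ^ (-(1/2 : ℝ)) *
          (|W (↑(⌊(n:ℝ) * t⌋₊)) ω - W ((n:ℝ) * t) ω| / q t)}
      ≤ μ (⋃ k ∈ Finset.Icc 1 n, Bad k) := measure_mono hsub
    _ ≤ ∑ k ∈ Finset.Icc 1 n, μ (Bad k) := measure_biUnion_finset_le _ _
    _ ≤ ∑ k ∈ Finset.Icc 1 n, ENNReal.ofReal (2*Real.sqrt 2*Real.exp (-(ak k)^2/16)) :=
        Finset.sum_le_sum hBadLe
    _ = ENNReal.ofReal (∑ k ∈ Finset.Icc 1 n, (2*Real.sqrt 2*Real.exp (-(ak k)^2/16))) :=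
        (ENNReal.ofReal_sum_of_nonneg (fun k _ => by positivity)).symm
    _ ≤ ENNReal.ofReal ρ := ENNReal.ofReal_le_ofReal hsum
    _ ≤ η := hρle
end
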